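/- arXiv:1606.00491 — 8 statements merged into one kernel-verified Lean document; each statement's English description precedes it below -/
import Mathlib

section
/- Let f_1,…,f_m ∈ ℝ[x₁,…,x_n] with deg(f_i) ≤ d for all i, and let I = ⟨f_1,…,f_m⟩ be the ideal they generate in ℝ[x]. Let λ : ℝ[x]_{≤2d} → ℝ be a linear functional with λ(1) = 1 such that the truncated moment matrix M(λ) is positive semidefinite and M(λ)·vec(f_i) = 0 for every i. If M(λ) has maximum rank, i.e. for every linear functional λ' : ℝ[x]_{≤2d} → ℝ with λ'(1) = 1, M(λ') positive semidefinite and M(λ')·vec(f_i) = 0 for all i one has rank M(λ') ≤ rank M(λ), then ℙ(ker M(λ)) ⊆ √ᴿ(I). -/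
/-- The real radical of an ideal `I` in `ℝ[x₁,…,xₙ]`:
`{f : f^(2t) + q₁² + ⋯ + q_s² ∈ I` for some `t ≥ 1` and polynomials `q_j}`. -/
def realRadical {n : ℕ} (I : Ideal (MvPolynomial (Fin n) ℝ)) :
    Set (MvPolynomial (Fin n) ℝ) :=
  {f | ∃ t : ℕ, 1 ≤ t ∧ ∃ (s : ℕ) (q : Fin s → MvPolynomial (Fin n) ℝ),
      f ^ (2 * t) + ∑ j, q j ^ 2 ∈ I}

/-- The linear map underlying the truncated moment matrix `M(λ)` of level `d`:
it sends a polynomial `p` of total degree `≤ d` to the vector whose `α`-entry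
(for a monomial exponent `α` of degree `≤ d`) is `λ(x^α · p)`.  The rank of this
map is the rank of the moment matrix. -/
noncomputable def momentMap (n d : ℕ) (l : MvPolynomial (Fin n) ℝ →ₗ[ℝ] ℝ) :
    (MvPolynomial.restrictTotalDegree (Fin n) ℝ d) →ₗ[ℝ] ((Fin n →₀ ℕ) → ℝ) where
  toFun p := fun α => if (α.sum fun _ e => e) ≤ d then
      l (MvPolynomial.monomial α 1 * (p : MvPolynomial (Fin n) ℝ)) else 0
  map_add' p q := by
    funext α
    by_cases h : (α.sum fun _ e => e) ≤ d <;> simp [h, mul_add]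
  map_smul' c p := by
    funext α
    by_cases h : (α.sum fun _ e => e) ≤ d <;> simp [h, mul_smul_comm]

/-- The rank of the truncated moment matrix `M(λ)` of level `d`. -/
noncomputable def momentRank (n d : ℕ) (l : MvPolynomial (Fin n) ℝ →ₗ[ℝ] ℝ) : ℕ :=
  Module.finrank ℝ (LinearMap.range (momentMap n d l))


namespace RRad

variable {n : ℕ}

theorem isSumSq_iff_finsum {x : (MvPolynomial (Fin n) ℝ)} :
    IsSumSq x ↔ ∃ (s : ℕ) (q : Fin s → (MvPolynomial (Fin n) ℝ)), x = ∑ j, q j ^ 2 := by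
  constructor
  · intro h
    induction h with
    | zero => exact ⟨0, ![], by simp⟩
    | sq_add a _ ih =>
      obtain ⟨s, q, rfl⟩ := ih
      exact ⟨s + 1, Fin.cons a q, by
        rw [Fin.sum_univ_succ]; simp [sq, Fin.cons]⟩
  · rintro ⟨s, q, rfl⟩
    have : ∀ (t : Finset (Fin s)), IsSumSq (∑ j ∈ t, q j ^ 2) := by
      intro t
      induction t using Finset.induction with
      | empty => simpa using IsSumSq.zero
      | insert x t hx ih =>
        rw [Finset.sum_insert hx]
        simpa [sq] using IsSumSq.sq_add _ ih
    exact this Finset.univ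

theorem IsSumSq.sq_mul {y : (MvPolynomial (Fin n) ℝ)} (a : (MvPolynomial (Fin n) ℝ)) (hy : IsSumSq y) : IsSumSq ((a * a) * y) := by
  induction hy with
  | zero => simpa using IsSumSq.zero
  | sq_add b hT ih =>
    rw [mul_add]
    refine IsSumSq.add ?_ ih
    have : a * a * (b * b) = (a*b) * (a*b) := by ring
    rw [this]
    simpa using IsSumSq.sq_add (a*b) IsSumSq.zero

theorem IsSumSq.mul {x y : (MvPolynomial (Fin n) ℝ)} (hx : IsSumSq x) (hy : IsSumSq y) : IsSumSq (x * y) := by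
  induction hx with
  | zero => simpa using IsSumSq.zero
  | sq_add a hS ih =>
    rw [add_mul]
    exact IsSumSq.add (IsSumSq.sq_mul a hy) ih

theorem IsSumSq.sq' (a : (MvPolynomial (Fin n) ℝ)) : IsSumSq (a ^ 2) := by
  simpa [sq] using IsSumSq.sq_add a IsSumSq.zero

theorem IsSumSq.even_pow (a : (MvPolynomial (Fin n) ℝ)) (k : ℕ) : IsSumSq (a ^ (2 * k)) := by
  rw [pow_mul']
  exact IsSumSq.sq' (a ^ k)

theorem IsSumSq.natCast (c : ℕ) : IsSumSq (c : (MvPolynomial (Fin n) ℝ)) := by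
  induction c with
  | zero => simpa using IsSumSq.zero
  | succ k ih =>
    push_cast
    refine IsSumSq.add ih ?_
    simpa using IsSumSq.sq' (1 : (MvPolynomial (Fin n) ℝ))

theorem IsSumSq.pow_pos {a : (MvPolynomial (Fin n) ℝ)} (ha : IsSumSq a) {k : ℕ} (hk : 1 ≤ k) : IsSumSq (a ^ k) := by
  induction k with
  | zero => omega
  | succ j ih =>
    rcases Nat.eq_zero_or_pos j with rfl | hj
    · simpa using ha
    · rw [pow_succ]
      exact IsSumSq.mul (ih hj) ha

variable (I : Ideal (MvPolynomial (Fin n) ℝ))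

/-- certificate set: `x + (sum of squares) ∈ I`. -/
@[reducible] def Cert (x : (MvPolynomial (Fin n) ℝ)) : Prop := ∃ σ : (MvPolynomial (Fin n) ℝ), IsSumSq σ ∧ x + σ ∈ I

theorem Cert.of_mem {x : (MvPolynomial (Fin n) ℝ)} (hx : x ∈ I) : Cert I x :=
  ⟨0, IsSumSq.zero, by simpa using hx⟩

theorem Cert.add {x y : (MvPolynomial (Fin n) ℝ)} (hx : Cert I x) (hy : Cert I y) : Cert I (x + y) := by
  obtain ⟨σ, hσ, hxi⟩ := hx
  obtain ⟨τ, hτ, hyi⟩ := hy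
  exact ⟨σ + τ, IsSumSq.add hσ hτ, by
    have : x + y + (σ + τ) = (x + σ) + (y + τ) := by ring
    rw [this]; exact Ideal.add_mem I hxi hyi⟩

theorem Cert.sos_mul {m x : (MvPolynomial (Fin n) ℝ)} (hm : IsSumSq m) (hx : Cert I x) : Cert I (m * x) := by
  obtain ⟨σ, hσ, hxi⟩ := hx
  exact ⟨m * σ, IsSumSq.mul hm hσ, by
    have : m * x + m * σ = m * (x + σ) := by ring
    rw [this]; exact Ideal.mul_mem_left I m hxi⟩

theorem Cert.of_add_sos {x s y : (MvPolynomial (Fin n) ℝ)} (hs : IsSumSq s) (hxy : x + s = y) (hy : Cert I y) :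
    Cert I x := by
  obtain ⟨σ, hσ, hyi⟩ := hy
  exact ⟨s + σ, IsSumSq.add hs hσ, by rw [← add_assoc, hxy]; exact hyi⟩

theorem Cert.sum {ι : Type*} {s : Finset ι} {g : ι → (MvPolynomial (Fin n) ℝ)} (h : ∀ i ∈ s, Cert I (g i)) :
    Cert I (∑ i ∈ s, g i) := by
  induction s using Finset.cons_induction with
  | empty => simpa using Cert.of_mem I (Ideal.zero_mem I)
  | cons a s ha ih =>
    rw [Finset.sum_cons]
    exact Cert.add I (h _ (Finset.mem_cons_self _ _))
      (ih fun i hi => h i (Finset.mem_cons_of_mem hi))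

theorem IsSumSq.sum {ι : Type*} {s : Finset ι} {g : ι → (MvPolynomial (Fin n) ℝ)} (h : ∀ i ∈ s, IsSumSq (g i)) :
    IsSumSq (∑ i ∈ s, g i) := by
  induction s using Finset.cons_induction with
  | empty => simpa using IsSumSq.zero
  | cons a s ha ih =>
    rw [Finset.sum_cons]
    exact IsSumSq.add (h _ (Finset.mem_cons_self _ _))
      (ih fun i hi => h i (Finset.mem_cons_of_mem hi))

theorem mem_realRadical_iff {p : (MvPolynomial (Fin n) ℝ)} :
    p ∈ realRadical I ↔ ∃ t : ℕ, 1 ≤ t ∧ Cert I (p ^ (2 * t)) := by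
  unfold realRadical Cert
  constructor
  · rintro ⟨t, ht, s, q, hmem⟩
    exact ⟨t, ht, ∑ j, q j ^ 2, isSumSq_iff_finsum.2 ⟨s, q, rfl⟩, hmem⟩
  · rintro ⟨t, ht, σ, hσ, hmem⟩
    obtain ⟨s, q, rfl⟩ := isSumSq_iff_finsum.1 hσ
    exact ⟨t, ht, s, q, hmem⟩

theorem ideal_subset_realRadical {p : (MvPolynomial (Fin n) ℝ)} (hp : p ∈ I) : p ∈ realRadical I := by
  rw [mem_realRadical_iff]
  exact ⟨1, le_refl 1, Cert.of_mem I (by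
    have : p ^ (2 * 1) = p * p := by ring
    rw [this]; exact Ideal.mul_mem_left I p hp)⟩

/-- key fact: the real radical is "real": if `g^2 + (sum of squares) ∈ realRadical I`
then `g ∈ realRadical I`. -/
theorem real_realRadical {g σ : (MvPolynomial (Fin n) ℝ)} (hσ : IsSumSq σ) (h : g ^ 2 + σ ∈ realRadical I) :
    g ∈ realRadical I := by
  rw [mem_realRadical_iff] at h ⊢
  obtain ⟨t, ht, hc⟩ := h
  refine ⟨2 * t, by omega, ?_⟩
  set N := 2 * t with hN
  -- (g^2 + σ)^N = ∑_{k ≤ N} (g^2)^k σ^(N-k) C(N,k) ; top term is g^(2N)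
  have expand := add_pow (g ^ 2) σ N
  rw [Finset.sum_range_succ] at expand
  -- expand : (g^2+σ)^N = (∑ k < N, ...) + (g^2)^N * σ^0 * C(N,N)
  have htop : (g ^ 2) ^ N * σ ^ (N - N) * (N.choose N : (MvPolynomial (Fin n) ℝ)) = g ^ (2 * (2 * t)) := by
    rw [Nat.sub_self, pow_zero, Nat.choose_self, ← pow_mul]
    push_cast
    rw [mul_one, mul_one, hN]
  have hrest : IsSumSq (∑ k ∈ Finset.range N, (g ^ 2) ^ k * σ ^ (N - k) * (N.choose k : (MvPolynomial (Fin n) ℝ))) := by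
    refine IsSumSq.sum ?_
    intro k hk
    rw [Finset.mem_range] at hk
    refine IsSumSq.mul (IsSumSq.mul ?_ (IsSumSq.pow_pos hσ (by omega))) (IsSumSq.natCast _)
    rw [← pow_mul]
    exact IsSumSq.even_pow g k
  refine Cert.of_add_sos I hrest ?_ hc
  rw [← htop]
  rw [expand]
  ring

theorem realRadical_mul_left {a : (MvPolynomial (Fin n) ℝ)} (h : (MvPolynomial (Fin n) ℝ))
    (ha : a ∈ realRadical I) : h * a ∈ realRadical I := by
  rw [mem_realRadical_iff] at ha ⊢
  obtain ⟨t, ht, σ, hσ, hmem⟩ := ha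
  refine ⟨t, ht, ?_⟩
  have key : (h * a) ^ (2 * t) = h ^ (2 * t) * a ^ (2 * t) := by ring
  rw [key]
  exact Cert.sos_mul I (IsSumSq.even_pow h t) ⟨σ, hσ, hmem⟩

theorem realRadical_add {a b : (MvPolynomial (Fin n) ℝ)}
    (ha : a ∈ realRadical I) (hb : b ∈ realRadical I) : a + b ∈ realRadical I := by
  rw [mem_realRadical_iff] at ha hb ⊢
  obtain ⟨t₁, ht₁, ca⟩ := ha
  obtain ⟨t₂, ht₂, cb⟩ := hb
  set T := t₁ + t₂ with hT
  refine ⟨T, by omega, ?_⟩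
  -- Step B : (2a²+2b²)^T has a certificate
  have stepB : Cert I ((2 * a ^ 2 + 2 * b ^ 2) ^ T) := by
    rw [add_pow]
    refine Cert.sum I ?_
    intro k hk
    rw [Finset.mem_range] at hk
    rcases le_or_gt t₁ k with hcase | hcase
    · -- k ≥ t₁ : term is a SOS multiple of a^(2t₁)
      have key : (2 * a ^ 2) ^ k * (2 * b ^ 2) ^ (T - k) * (T.choose k : (MvPolynomial (Fin n) ℝ))
          = ((2:(MvPolynomial (Fin n) ℝ)) ^ k * 2 ^ (T - k) * (T.choose k : (MvPolynomial (Fin n) ℝ))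
              * a ^ (2 * (k - t₁)) * b ^ (2 * (T - k))) * a ^ (2 * t₁) := by
        rw [mul_pow, mul_pow, ← pow_mul, ← pow_mul]
        have : 2 * k = 2 * (k - t₁) + 2 * t₁ := by omega
        rw [this, pow_add]
        ring
      rw [key]
      refine Cert.sos_mul I ?_ ca
      have h2 : IsSumSq ((2:(MvPolynomial (Fin n) ℝ)) ^ k * 2 ^ (T - k)) := by
        have : ((2:(MvPolynomial (Fin n) ℝ)) ^ k * 2 ^ (T - k)) = ((2^k * 2^(T-k) : ℕ) : (MvPolynomial (Fin n) ℝ)) := by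
          push_cast; ring
        rw [this]
        exact IsSumSq.natCast _
      exact IsSumSq.mul (IsSumSq.mul (IsSumSq.mul h2 (IsSumSq.natCast _))
        (IsSumSq.even_pow _ _)) (IsSumSq.even_pow _ _)
    · -- k < t₁ : then T - k ≥ t₂, term is a SOS multiple of b^(2t₂)
      have hge : t₂ ≤ T - k := by omega
      have key : (2 * a ^ 2) ^ k * (2 * b ^ 2) ^ (T - k) * (T.choose k : (MvPolynomial (Fin n) ℝ))
          = ((2:(MvPolynomial (Fin n) ℝ)) ^ k * 2 ^ (T - k) * (T.choose k : (MvPolynomial (Fin n) ℝ))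
              * a ^ (2 * k) * b ^ (2 * (T - k - t₂))) * b ^ (2 * t₂) := by
        rw [mul_pow, mul_pow, ← pow_mul, ← pow_mul]
        have : 2 * (T - k) = 2 * (T - k - t₂) + 2 * t₂ := by omega
        rw [this, pow_add]
        ring
      rw [key]
      refine Cert.sos_mul I ?_ cb
      have h2 : IsSumSq ((2:(MvPolynomial (Fin n) ℝ)) ^ k * 2 ^ (T - k)) := by
        have : ((2:(MvPolynomial (Fin n) ℝ)) ^ k * 2 ^ (T - k)) = ((2^k * 2^(T-k) : ℕ) : (MvPolynomial (Fin n) ℝ)) := by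
          push_cast; ring
        rw [this]
        exact IsSumSq.natCast _
      exact IsSumSq.mul (IsSumSq.mul (IsSumSq.mul h2 (IsSumSq.natCast _))
        (IsSumSq.even_pow _ _)) (IsSumSq.even_pow _ _)
  -- Step A : (a+b)^(2T) + SOS = (2a²+2b²)^T
  have hid : (2 * a ^ 2 + 2 * b ^ 2) ^ T = ((a + b) ^ 2 + (a - b) ^ 2) ^ T := by ring
  rw [hid] at stepB
  rw [add_pow] at stepB
  rw [Finset.sum_range_succ] at stepB
  have htop : ((a + b) ^ 2) ^ T * ((a - b) ^ 2) ^ (T - T) * (T.choose T : (MvPolynomial (Fin n) ℝ))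
      = (a + b) ^ (2 * T) := by
    rw [Nat.sub_self, pow_zero, Nat.choose_self, ← pow_mul]
    push_cast
    rw [mul_one, mul_one]
  rw [htop] at stepB
  have hrest : IsSumSq (∑ k ∈ Finset.range T,
      ((a + b) ^ 2) ^ k * ((a - b) ^ 2) ^ (T - k) * (T.choose k : (MvPolynomial (Fin n) ℝ))) := by
    refine IsSumSq.sum ?_
    intro k hk
    rw [Finset.mem_range] at hk
    refine IsSumSq.mul (IsSumSq.mul ?_ ?_) (IsSumSq.natCast _)
    · rw [← pow_mul]; exact IsSumSq.even_pow _ _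
    · rw [← pow_mul]; exact IsSumSq.even_pow _ _
  exact Cert.of_add_sos I hrest (by rw [add_comm]) stepB

theorem realRadical_neg {a : (MvPolynomial (Fin n) ℝ)} (ha : a ∈ realRadical I) :
    -a ∈ realRadical I := by
  have := realRadical_mul_left I (-1) ha
  simpa using this

theorem realRadical_zero : (0 : (MvPolynomial (Fin n) ℝ)) ∈ realRadical I :=
  ideal_subset_realRadical I (Ideal.zero_mem I)

theorem realRadical_smul (c : ℝ) {a : (MvPolynomial (Fin n) ℝ)} (ha : a ∈ realRadical I) :
    c • a ∈ realRadical I := by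
  rw [MvPolynomial.smul_eq_C_mul]
  exact realRadical_mul_left I _ ha

end RRad


namespace RRad2

/-- coordinate space for polynomials of degree at most `D` -/
abbrev TupSp (n D : ℕ) := (Fin n → Fin (D + 1)) → ℝ

/-- the exponent finsupp corresponding to a tuple -/
noncomputable def tupExp {n D : ℕ} (v : Fin n → Fin (D + 1)) : Fin n →₀ ℕ :=
  Finsupp.equivFunOnFinite.symm (fun i => (v i : ℕ))

@[simp] theorem tupExp_apply {n D : ℕ} (v : Fin n → Fin (D + 1)) (i : Fin n) :
    tupExp v i = (v i : ℕ) := rfl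

/-- the (truncated) coefficient map, as a linear map -/
noncomputable def coeffL (n D : ℕ) : MvPolynomial (Fin n) ℝ →ₗ[ℝ] TupSp n D where
  toFun g := fun v => MvPolynomial.coeff (tupExp v) g
  map_add' g h := by funext v; simp [MvPolynomial.coeff_add]
  map_smul' c g := by funext v; simp [MvPolynomial.coeff_smul]

theorem coeff_eq_zero_of_degree {n D : ℕ} {g : MvPolynomial (Fin n) ℝ}
    (hg : g.totalDegree ≤ D) {α : Fin n →₀ ℕ} (hα : ¬ (α.sum fun _ e => e) ≤ D) :
    MvPolynomial.coeff α g = 0 := by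
  by_contra hne
  have hmem : α ∈ g.support := by
    rwa [MvPolynomial.mem_support_iff]
  exact hα (le_trans (MvPolynomial.le_totalDegree hmem) hg)

theorem single_le_degsum {n : ℕ} (α : Fin n →₀ ℕ) (i : Fin n) :
    α i ≤ (α.sum fun _ e => e) := by
  rcases Nat.eq_zero_or_pos (α i) with h | h
  · omega
  · have hi : i ∈ α.support := Finsupp.mem_support_iff.2 (by omega)
    exact Finset.single_le_sum (f := fun j => α j) (fun j _ => Nat.zero_le _) hi

theorem coeffL_inj {n D : ℕ} {g h : MvPolynomial (Fin n) ℝ}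
    (hg : g.totalDegree ≤ D) (hh : h.totalDegree ≤ D)
    (he : coeffL n D g = coeffL n D h) : g = h := by
  apply MvPolynomial.ext
  intro α
  by_cases hα : (α.sum fun _ e => e) ≤ D
  · have hbound : ∀ i, α i < D + 1 := fun i =>
      Nat.lt_succ_of_le (le_trans (single_le_degsum α i) hα)
    set v : Fin n → Fin (D + 1) := fun i => ⟨α i, hbound i⟩ with hv
    have hαv : tupExp v = α := by
      apply Finsupp.ext
      intro i
      simp [hv]
    have := congrFun he v
    simpa [coeffL, hαv] using this
  · rw [coeff_eq_zero_of_degree hg hα, coeff_eq_zero_of_degree hh hα]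

instance restrictTotalDegree_fd (n D : ℕ) :
    FiniteDimensional ℝ ↥(MvPolynomial.restrictTotalDegree (Fin n) ℝ D) := by
  refine FiniteDimensional.of_injective
    ((coeffL n D).comp (MvPolynomial.restrictTotalDegree (Fin n) ℝ D).subtype) ?_
  intro x y hxy
  have hx := ((MvPolynomial.mem_restrictTotalDegree (Fin n) D (x : MvPolynomial (Fin n) ℝ)).1 x.2)
  have hy := ((MvPolynomial.mem_restrictTotalDegree (Fin n) D (y : MvPolynomial (Fin n) ℝ)).1 y.2)
  exact Subtype.ext (coeffL_inj hx hy hxy)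

end RRad2

namespace RRad3

variable {n k : ℕ}

/-- The Gram map: a matrix `A` is sent to `∑ i j, A i j • (c i * c j)`. -/
noncomputable def phi (c : Fin k → MvPolynomial (Fin n) ℝ) :
    (Fin k → Fin k → ℝ) →ₗ[ℝ] MvPolynomial (Fin n) ℝ where
  toFun A := ∑ i, ∑ j, A i j • (c i * c j)
  map_add' A B := by
    simp [add_smul, Finset.sum_add_distrib]
  map_smul' r A := by
    simp [Finset.smul_sum, smul_smul]

theorem phi_outer (c : Fin k → MvPolynomial (Fin n) ℝ) {s : ℕ} (C : Fin s → Fin k → ℝ) :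
    phi c (fun l m => ∑ j, C j l * C j m) = ∑ j, (∑ l, C j l • c l) ^ 2 := by
  have step : ∀ j : Fin s, (∑ l, C j l • c l) ^ 2 = ∑ l, ∑ m, (C j l * C j m) • (c l * c m) := by
    intro j
    rw [sq, Finset.sum_mul_sum]
    congr 1
    funext l
    congr 1
    funext m
    rw [smul_mul_smul_comm]
  simp only [step]
  rw [Finset.sum_comm]
  unfold phi
  simp only [LinearMap.coe_mk, AddHom.coe_mk]
  congr 1
  funext l
  rw [Finset.sum_comm]
  congr 1
  funext m
  rw [Finset.sum_smul]

theorem posSemidef_decomp {A : Fin k → Fin k → ℝ} (hA : (Matrix.of A).PosSemidef) :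
    ∃ N : Fin k → Fin k → ℝ, A = fun l m => ∑ j, N j l * N j m := by
  obtain ⟨N, hN⟩ : ∃ N : Matrix (Fin k) (Fin k) ℝ, Matrix.of A = N.conjTranspose * N := by
    open scoped MatrixOrder in
    exact ⟨CFC.sqrt (Matrix.of A), by
      rw [← Matrix.star_eq_conjTranspose,
        (IsSelfAdjoint.of_nonneg (CFC.sqrt_nonneg (Matrix.of A))).star_eq,
        CFC.sqrt_mul_sqrt_self _ hA.nonneg]⟩
  refine ⟨fun i j => N i j, ?_⟩
  funext l m
  have := congrFun (congrFun (congrArg (fun M => (M : Matrix (Fin k) (Fin k) ℝ)) hN) l) m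
  simp only [Matrix.of_apply] at this
  rw [this, Matrix.mul_apply]
  simp [Matrix.conjTranspose_apply]

theorem outer_posSemidef {s : ℕ} (C : Fin s → Fin k → ℝ) :
    (Matrix.of (fun l m => ∑ j, C j l * C j m)).PosSemidef := by
  have : Matrix.of (fun l m => ∑ j, C j l * C j m)
      = (Matrix.of C).conjTranspose * (Matrix.of C) := by
    apply Matrix.ext
    intro l m
    rw [Matrix.mul_apply]
    simp [Matrix.conjTranspose_apply]
  rw [this]
  exact Matrix.posSemidef_conjTranspose_mul_self _

theorem posSemidef_smul' {A : Fin k → Fin k → ℝ} (hA : (Matrix.of A).PosSemidef)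
    {r : ℝ} (hr : 0 ≤ r) : (Matrix.of (r • A)).PosSemidef := by
  obtain ⟨N, rfl⟩ := posSemidef_decomp hA
  have : Matrix.of (r • fun l m => ∑ j, N j l * N j m)
      = Matrix.of (fun l m => ∑ j, (Real.sqrt r * N j l) * (Real.sqrt r * N j m)) := by
    apply Matrix.ext
    intro l m
    simp only [Matrix.of_apply, Pi.smul_apply, smul_eq_mul]
    rw [Finset.mul_sum]
    congr 1
    funext j
    have : Real.sqrt r * N j l * (Real.sqrt r * N j m)
        = (Real.sqrt r * Real.sqrt r) * (N j l * N j m) := by ring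
    rw [this, Real.mul_self_sqrt hr]
  rw [this]
  exact outer_posSemidef _

end RRad3

namespace RRad4

open Filter Topology

theorem closed_image_of_cone {X Y : Type*} [NormedAddCommGroup X] [NormedSpace ℝ X]
    [FiniteDimensional ℝ X] [NormedAddCommGroup Y] [NormedSpace ℝ Y]
    (T : X →ₗ[ℝ] Y) (K : Set X) (hK : IsClosed K)
    (hcone : ∀ (c : ℝ), 0 ≤ c → ∀ x ∈ K, c • x ∈ K)
    (hker : ∀ x ∈ K, T x = 0 → x = 0) : IsClosed (T '' K) := by
  have hTc : Continuous T := T.continuous_of_finiteDimensional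
  -- properness bound
  have hbound : ∃ c : ℝ, 0 < c ∧ ∀ x ∈ K, ‖x‖ ≤ c * ‖T x‖ := by
    by_contra hcon
    push_neg at hcon
    have H : ∀ m : ℕ, ∃ x, x ∈ K ∧ ‖x‖ > ((m : ℝ) + 1) * ‖T x‖ := by
      intro m
      obtain ⟨x, hx1, hx2⟩ := hcon ((m : ℝ) + 1) (by positivity)
      exact ⟨x, hx1, by linarith⟩
    choose x hxK hxlt using H
    have hxne : ∀ m, x m ≠ 0 := by
      intro m h0
      have := hxlt m
      rw [h0] at this
      simp at this
    set u : ℕ → X := fun m => (‖x m‖)⁻¹ • x m with hu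
    have huK : ∀ m, u m ∈ K := fun m =>
      hcone _ (inv_nonneg.2 (norm_nonneg _)) _ (hxK m)
    have hus : ∀ m, u m ∈ Metric.sphere (0 : X) 1 := by
      intro m
      simp only [Metric.mem_sphere, dist_zero_right]
      exact norm_smul_inv_norm (𝕜 := ℝ) (hxne m)
    obtain ⟨a, ha, φ, hφ, hconv⟩ := (isCompact_sphere (0 : X) 1).tendsto_subseq hus
    have haK : a ∈ K := hK.mem_of_tendsto hconv (Filter.Eventually.of_forall fun m => huK _)
    have hTum : ∀ m, ‖T (u m)‖ ≤ 1 / ((m : ℝ) + 1) := by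
      intro m
      have hpos : (0:ℝ) < ‖x m‖ := norm_pos_iff.2 (hxne m)
      have : ‖T (u m)‖ = (‖x m‖)⁻¹ * ‖T (x m)‖ := by
        rw [hu]
        simp only [map_smul, norm_smul, norm_inv, norm_norm]
      rw [this]
      have h2 : (0:ℝ) < (m:ℝ) + 1 := by positivity
      have key : ‖T (x m)‖ ≤ ‖x m‖ / ((m:ℝ)+1) := by
        rw [le_div_iff₀ h2, mul_comm]
        exact le_of_lt (hxlt m)
      calc (‖x m‖)⁻¹ * ‖T (x m)‖ ≤ (‖x m‖)⁻¹ * (‖x m‖ / ((m:ℝ)+1)) :=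
            mul_le_mul_of_nonneg_left key (by positivity)
        _ = 1/((m:ℝ)+1) := by field_simp
    have hT0 : Tendsto (fun m => T (u (φ m))) atTop (𝓝 (T a)) :=
      (hTc.tendsto a).comp hconv
    have hT0' : Tendsto (fun m => T (u (φ m))) atTop (𝓝 0) := by
      rw [tendsto_zero_iff_norm_tendsto_zero]
      refine squeeze_zero (fun m => norm_nonneg _) (fun m => hTum (φ m)) ?_
      have : Tendsto (fun m : ℕ => 1 / ((m : ℝ) + 1)) atTop (𝓝 0) :=
        tendsto_one_div_add_atTop_nhds_zero_nat
      refine this.comp (tendsto_natCast_atTop_atTop.comp hφ.tendsto_atTop) |>.congr ?_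
      intro m
      simp
    have hTa : T a = 0 := tendsto_nhds_unique hT0 hT0'
    have ha0 : a = 0 := hker a haK hTa
    rw [ha0] at ha
    simp at ha
  obtain ⟨c, hc, hbd⟩ := hbound
  -- closedness via sequences
  refine IsSeqClosed.isClosed ?_
  intro y p hy hyp
  choose x hxK hxT using hy
  have hybd : BddAbove (Set.range fun m => ‖y m‖) := (hyp.norm).bddAbove_range
  obtain ⟨M, hM⟩ := hybd
  have hxbd : ∀ m, x m ∈ Metric.closedBall (0 : X) (c * M) := by
    intro m
    simp only [Metric.mem_closedBall, dist_zero_right]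
    calc ‖x m‖ ≤ c * ‖T (x m)‖ := hbd _ (hxK m)
    _ = c * ‖y m‖ := by rw [hxT m]
    _ ≤ c * M := by
        have : ‖y m‖ ≤ M := hM ⟨m, rfl⟩
        nlinarith
  obtain ⟨a, _, φ, hφ, hconv⟩ := (isCompact_closedBall (0 : X) (c * M)).tendsto_subseq hxbd
  have haK : a ∈ K := hK.mem_of_tendsto hconv (Filter.Eventually.of_forall fun m => hxK _)
  have h1 : Tendsto (fun m => T (x (φ m))) atTop (𝓝 (T a)) := (hTc.tendsto a).comp hconv
  have h2 : Tendsto (fun m => T (x (φ m))) atTop (𝓝 p) := by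
    have := hyp.comp hφ.tendsto_atTop
    refine this.congr ?_
    intro m
    simp [hxT]
  exact ⟨a, haK, tendsto_nhds_unique h1 h2⟩

end RRad4

namespace RRad5

variable {n : ℕ}

theorem l_mul_eq_zero {d : ℕ} (l : MvPolynomial (Fin n) ℝ →ₗ[ℝ] ℝ)
    {g q : MvPolynomial (Fin n) ℝ} (hg : g.totalDegree ≤ d)
    (h : ∀ α : Fin n →₀ ℕ, (α.sum fun _ e => e) ≤ d → l (MvPolynomial.monomial α 1 * q) = 0) :
    l (g * q) = 0 := by
  conv_lhs => rw [g.as_sum]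
  rw [Finset.sum_mul, map_sum]
  refine Finset.sum_eq_zero ?_
  intro α hα
  have hdeg : (α.sum fun _ e => e) ≤ d := le_trans (MvPolynomial.le_totalDegree hα) hg
  have key : (MvPolynomial.monomial α) (MvPolynomial.coeff α g) * q
      = (MvPolynomial.coeff α g) • (MvPolynomial.monomial α 1 * q) := by
    rw [MvPolynomial.smul_eq_C_mul, ← mul_assoc, MvPolynomial.C_mul_monomial, mul_one]
  rw [key, map_smul, h α hdeg, smul_eq_mul, mul_zero]

theorem momentMap_eq_zero_iff {d : ℕ} (l : MvPolynomial (Fin n) ℝ →ₗ[ℝ] ℝ)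
    (Q : MvPolynomial.restrictTotalDegree (Fin n) ℝ d) :
    momentMap n d l Q = 0 ↔ ∀ α : Fin n →₀ ℕ, (α.sum fun _ e => e) ≤ d →
      l (MvPolynomial.monomial α 1 * (Q : MvPolynomial (Fin n) ℝ)) = 0 := by
  constructor
  · intro h0 α hα
    have := congrFun h0 α
    simpa [momentMap, hα] using this
  · intro h
    funext α
    by_cases hα : (α.sum fun _ e => e) ≤ d <;> simp [momentMap, hα, h]

theorem totalDegree_smul_le' {q : MvPolynomial (Fin n) ℝ} (t : ℝ) :
    (t • q).totalDegree ≤ q.totalDegree := by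
  rw [MvPolynomial.smul_eq_C_mul]
  refine le_trans (MvPolynomial.totalDegree_mul _ _) ?_
  simp [MvPolynomial.totalDegree_C]

/-- Cauchy–Schwarz step: if the moment form of `l` is psd up to degree `d` and
`l (q*q) = 0` for `q` of degree `≤ d`, then `l (x^α * q) = 0` for all `|α| ≤ d`. -/
theorem psd_kernel_step {d : ℕ} (l : MvPolynomial (Fin n) ℝ →ₗ[ℝ] ℝ)
    (hpsd : ∀ p : MvPolynomial (Fin n) ℝ, p.totalDegree ≤ d → 0 ≤ l (p * p))
    {q : MvPolynomial (Fin n) ℝ} (hq : q.totalDegree ≤ d) (hq2 : l (q * q) = 0) :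
    ∀ α : Fin n →₀ ℕ, (α.sum fun _ e => e) ≤ d → l (MvPolynomial.monomial α 1 * q) = 0 := by
  intro α hα
  set X : MvPolynomial (Fin n) ℝ := MvPolynomial.monomial α 1 with hX
  set a : ℝ := l (X * X) with ha
  set b : ℝ := l (X * q) with hb
  have hdegX : X.totalDegree ≤ d := by
    rw [hX, MvPolynomial.totalDegree_monomial _ (one_ne_zero)]
    exact hα
  have claim : ∀ t : ℝ, 0 ≤ a + 2 * t * b := by
    intro t
    have hdeg : ((X + t • q)).totalDegree ≤ d := by
      refine le_trans (MvPolynomial.totalDegree_add _ _) ?_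
      exact max_le hdegX (le_trans (totalDegree_smul_le' t) hq)
    have h0 := hpsd _ hdeg
    have expand : (X + t • q) * (X + t • q)
        = X * X + t • (X * q) + (t • (X * q) + t • (t • (q * q))) := by
      rw [add_mul, mul_add, mul_add]
      rw [smul_mul_assoc, smul_mul_assoc, mul_smul_comm, mul_smul_comm]
      rw [mul_comm q X]
    rw [expand] at h0
    simp only [map_add, map_smul] at h0
    rw [hq2] at h0
    simp only [smul_eq_mul, mul_zero, add_zero] at h0
    rw [← ha, ← hb] at h0
    linarith
  by_contra hbne
  have hb0 : b ≠ 0 := hbne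
  have := claim (-(a + 1) / (2 * b))
  have hcalc : a + 2 * (-(a + 1) / (2 * b)) * b = -1 := by
    field_simp
    ring
  rw [hcalc] at this
  linarith

end RRad5

set_option maxHeartbeats 2000000 in
set_option synthInstance.maxHeartbeats 400000 in
/-- If `λ(1) = 1`, the truncated moment matrix `M(λ)` of level `d` is
positive semidefinite and kills each generator `fᵢ` (of degree `≤ d`) of the ideal `I`,
and `M(λ)` has maximum rank among all such moment matrices, then every polynomial in
`ℙ(ker M(λ))` belongs to the real radical of `I`. -/
theorem kernel_of_max_rank_moment_matrix_subset_realRadical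
    (n m d : ℕ) (f : Fin m → MvPolynomial (Fin n) ℝ)
    (hdeg : ∀ i, (f i).totalDegree ≤ d)
    (l : MvPolynomial (Fin n) ℝ →ₗ[ℝ] ℝ) (hl1 : l 1 = 1)
    (hpsd : ∀ p : MvPolynomial (Fin n) ℝ, p.totalDegree ≤ d → 0 ≤ l (p * p))
    (hkerf : ∀ i, ∀ α : Fin n →₀ ℕ, (α.sum fun _ e => e) ≤ d →
      l (MvPolynomial.monomial α 1 * f i) = 0)
    (hmax : ∀ l' : MvPolynomial (Fin n) ℝ →ₗ[ℝ] ℝ, l' 1 = 1 →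
      (∀ p : MvPolynomial (Fin n) ℝ, p.totalDegree ≤ d → 0 ≤ l' (p * p)) →
      (∀ i, ∀ α : Fin n →₀ ℕ, (α.sum fun _ e => e) ≤ d →
        l' (MvPolynomial.monomial α 1 * f i) = 0) →
      momentRank n d l' ≤ momentRank n d l) :
    ∀ p : MvPolynomial (Fin n) ℝ, p.totalDegree ≤ d →
      (∀ α : Fin n →₀ ℕ, (α.sum fun _ e => e) ≤ d →
        l (MvPolynomial.monomial α 1 * p) = 0) →
      p ∈ realRadical (Ideal.span (Set.range f)) := by
  intro p hpdeg hpker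
  by_contra hpnot
  set I : Ideal (MvPolynomial (Fin n) ℝ) := Ideal.span (Set.range f) with hI
  set Vd := MvPolynomial.restrictTotalDegree (Fin n) ℝ d with hVd
  set V2 := MvPolynomial.restrictTotalDegree (Fin n) ℝ (2 * d) with hV2
  haveI : FiniteDimensional ℝ ↥Vd := RRad2.restrictTotalDegree_fd n d
  haveI : FiniteDimensional ℝ ↥V2 := RRad2.restrictTotalDegree_fd n (2 * d)
  -- the real radical intersected with the degree-d and degree-2d truncations, as submodules
  set Wd : Submodule ℝ (MvPolynomial (Fin n) ℝ) :=
    { carrier := {g | g ∈ realRadical I ∧ g ∈ Vd},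
      add_mem' := fun ha hb => ⟨RRad.realRadical_add I ha.1 hb.1, Vd.add_mem ha.2 hb.2⟩,
      zero_mem' := ⟨RRad.realRadical_zero I, Vd.zero_mem⟩,
      smul_mem' := fun c x hx => ⟨RRad.realRadical_smul I c hx.1, Vd.smul_mem c hx.2⟩ }
    with hWd
  set W2 : Submodule ℝ (MvPolynomial (Fin n) ℝ) :=
    { carrier := {g | g ∈ realRadical I ∧ g ∈ V2},
      add_mem' := fun ha hb => ⟨RRad.realRadical_add I ha.1 hb.1, V2.add_mem ha.2 hb.2⟩,
      zero_mem' := ⟨RRad.realRadical_zero I, V2.zero_mem⟩,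
      smul_mem' := fun c x hx => ⟨RRad.realRadical_smul I c hx.1, V2.smul_mem c hx.2⟩ }
    with hW2
  -- complement of Wd inside Vd
  obtain ⟨B', hB'⟩ := Submodule.exists_isCompl (Wd.comap Vd.subtype)
  set B : Submodule ℝ (MvPolynomial (Fin n) ℝ) := B'.map Vd.subtype with hB
  have hBV : B ≤ Vd := Submodule.map_subtype_le _ _
  have hdecomp : ∀ g ∈ Vd, ∃ b ∈ B, ∃ w ∈ Wd, g = b + w := by
    intro g hg
    have htop : (⟨g, hg⟩ : ↥Vd) ∈ (Wd.comap Vd.subtype) ⊔ B' := by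
      rw [hB'.sup_eq_top]; trivial
    obtain ⟨y, hy, z, hz, hyz⟩ := Submodule.mem_sup.1 htop
    refine ⟨(z : MvPolynomial (Fin n) ℝ), Submodule.mem_map.2 ⟨z, hz, rfl⟩,
      (y : MvPolynomial (Fin n) ℝ), hy, ?_⟩
    have := congrArg (fun v : ↥Vd => (v : MvPolynomial (Fin n) ℝ)) hyz
    simp only [Submodule.coe_add] at this
    rw [← this]
    ring
  have hBzero : ∀ b ∈ B, b ∈ realRadical I → b = 0 := by
    intro b hbB hbrr
    obtain ⟨z, hz, rfl⟩ := Submodule.mem_map.1 hbB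
    have hzW : z ∈ Wd.comap Vd.subtype := by
      simp only [Submodule.mem_comap]
      exact ⟨hbrr, z.2⟩
    have : z ∈ (Wd.comap Vd.subtype) ⊓ B' := ⟨hzW, hz⟩
    rw [hB'.inf_eq_bot] at this
    simp only [Submodule.mem_bot] at this
    rw [this]
    rfl
  haveI hfdB : FiniteDimensional ℝ ↥B :=
    FiniteDimensional.of_injective (Submodule.inclusion hBV) (Submodule.inclusion_injective hBV)
  set k := Module.finrank ℝ ↥B with hk
  set bas := Module.finBasis ℝ ↥B with hbas
  set cb : Fin k → MvPolynomial (Fin n) ℝ := fun i => ((bas i : ↥B) : MvPolynomial (Fin n) ℝ)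
    with hcb
  have hcbB : ∀ i, cb i ∈ B := fun i => (bas i : ↥B).2
  have hcbLI : LinearIndependent ℝ cb := by
    have := (bas.linearIndependent).map' B.subtype B.ker_subtype
    exact this
  set cL := RRad2.coeffL n (2 * d) with hcL
  set Φ := RRad3.phi cb with hΦ
  -- degree facts
  have hmemV2 : ∀ {a b : MvPolynomial (Fin n) ℝ}, a.totalDegree ≤ d → b.totalDegree ≤ d →
      a * b ∈ V2 := by
    intro a b ha hb
    rw [hV2, MvPolynomial.mem_restrictTotalDegree]
    refine le_trans (MvPolynomial.totalDegree_mul _ _) ?_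
    omega
  have hdegB : ∀ {b : MvPolynomial (Fin n) ℝ}, b ∈ B → b.totalDegree ≤ d := by
    intro b hb
    exact (MvPolynomial.mem_restrictTotalDegree (Fin n) d b).1 (hBV hb)
  have hΦV2 : ∀ A : Fin k → Fin k → ℝ, Φ A ∈ V2 := by
    intro A
    rw [hΦ]
    unfold RRad3.phi
    simp only [LinearMap.coe_mk, AddHom.coe_mk]
    refine Submodule.sum_mem _ fun i _ => Submodule.sum_mem _ fun j _ => Submodule.smul_mem _ _ ?_
    exact hmemV2 (hdegB (hcbB i)) (hdegB (hcbB j))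
  have hdegV2 : ∀ {g : MvPolynomial (Fin n) ℝ}, g ∈ V2 → g.totalDegree ≤ 2 * d := by
    intro g hg
    exact (MvPolynomial.mem_restrictTotalDegree (Fin n) (2*d) g).1 hg
  -- sums of squares of elements of B are of the form Φ A with A psd
  have hsosA : ∀ (s : ℕ) (qf : Fin s → MvPolynomial (Fin n) ℝ), (∀ j, qf j ∈ B) →
      ∃ A : Fin k → Fin k → ℝ, (Matrix.of A).PosSemidef ∧ Φ A = ∑ j, qf j ^ 2 := by
    intro s qf hqf
    set C : Fin s → Fin k → ℝ := fun j => fun lx => (bas.repr ⟨qf j, hqf j⟩) lx with hC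
    have hrepr : ∀ j, qf j = ∑ lx, C j lx • cb lx := by
      intro j
      have := bas.sum_repr ⟨qf j, hqf j⟩
      have := congrArg (fun v : ↥B => (v : MvPolynomial (Fin n) ℝ)) this
      simp only [Submodule.coe_sum, Submodule.coe_smul] at this
      rw [← this]
    refine ⟨fun lx mx => ∑ j, C j lx * C j mx, RRad3.outer_posSemidef C, ?_⟩
    rw [hΦ, RRad3.phi_outer cb C]
    congr 1
    funext j
    rw [← hrepr j]
  -- conversely, Φ A for psd A is a sum of squares of elements of B
  have hAsos : ∀ A : Fin k → Fin k → ℝ, (Matrix.of A).PosSemidef →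
      ∃ N : Fin k → Fin k → ℝ, (A = fun lx mx => ∑ j, N j lx * N j mx) ∧
        Φ A = ∑ j, (∑ lx, N j lx • cb lx) ^ 2 ∧ ∀ j, (∑ lx, N j lx • cb lx) ∈ B := by
    intro A hA
    obtain ⟨N, hN⟩ := RRad3.posSemidef_decomp hA
    refine ⟨N, hN, ?_, fun j => Submodule.sum_mem _ fun lx _ => Submodule.smul_mem _ _ (hcbB lx)⟩
    rw [hΦ, hN, RRad3.phi_outer cb N]
  -- if Φ A ∈ realRadical I with A psd then A = 0
  have hAzero : ∀ A : Fin k → Fin k → ℝ, (Matrix.of A).PosSemidef →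
      Φ A ∈ realRadical I → A = 0 := by
    intro A hA hrr
    obtain ⟨N, hN, hΦA, hNB⟩ := hAsos A hA
    set r : Fin k → MvPolynomial (Fin n) ℝ := fun j => ∑ lx, N j lx • cb lx with hr
    have hrzero : ∀ j, r j = 0 := by
      intro j
      have hsq : (r j) ^ 2 + ∑ jx ∈ Finset.univ.erase j, (r jx) ^ 2 ∈ realRadical I := by
        have hsum : (r j) ^ 2 + ∑ jx ∈ Finset.univ.erase j, (r jx) ^ 2
            = ∑ jx, (r jx) ^ 2 :=
          Finset.add_sum_erase Finset.univ (fun x => (r x) ^ 2) (Finset.mem_univ j)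
        rw [hsum, ← hΦA]
        exact hrr
      have hss : IsSumSq (∑ jx ∈ Finset.univ.erase j, (r jx) ^ 2) :=
        RRad.IsSumSq.sum fun i _ => RRad.IsSumSq.sq' (r i)
      have := RRad.real_realRadical I hss hsq
      exact hBzero _ (hNB j) this
    have hNzero : ∀ j lx, N j lx = 0 := by
      intro j
      have := (Fintype.linearIndependent_iff.1 hcbLI) (fun lx => N j lx) (hrzero j)
      exact this
    funext lx mx
    rw [hN]
    simp only [Pi.zero_apply]
    refine Finset.sum_eq_zero fun j _ => ?_
    rw [hNzero j lx, zero_mul]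
  -- the coordinate image of the real-radical part
  set W2E : Submodule ℝ (RRad2.TupSp n (2 * d)) := W2.map cL with hW2E
  -- the cone K
  set K : Set ((Fin k → Fin k → ℝ) × RRad2.TupSp n (2 * d)) :=
    {A : Fin k → Fin k → ℝ | (Matrix.of A).PosSemidef} ×ˢ (W2E : Set (RRad2.TupSp n (2 * d)))
    with hK
  set T : ((Fin k → Fin k → ℝ) × RRad2.TupSp n (2 * d)) →ₗ[ℝ] RRad2.TupSp n (2 * d) :=
    (cL.comp Φ).comp (LinearMap.fst ℝ _ _) + LinearMap.snd ℝ _ _ with hT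
  have hTapp : ∀ z : (Fin k → Fin k → ℝ) × RRad2.TupSp n (2 * d),
      T z = cL (Φ z.1) + z.2 := fun z => rfl
  have hKmem : ∀ z : (Fin k → Fin k → ℝ) × RRad2.TupSp n (2 * d),
      z ∈ K ↔ (Matrix.of z.1).PosSemidef ∧ z.2 ∈ W2E := fun z => Set.mem_prod
  -- injectivity of cL on V2
  have hinj : ∀ {a b : MvPolynomial (Fin n) ℝ}, a ∈ V2 → b ∈ V2 → cL a = cL b → a = b := by
    intro a b ha hb hab
    exact RRad2.coeffL_inj (hdegV2 ha) (hdegV2 hb) hab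
  -- K is a closed convex cone with trivial kernel overlap
  have hPSDclosed : IsClosed {A : Fin k → Fin k → ℝ | (Matrix.of A).PosSemidef} := by
    have heq : {A : Fin k → Fin k → ℝ | (Matrix.of A).PosSemidef}
        = (⋂ (i : Fin k) (j : Fin k), {A : Fin k → Fin k → ℝ | A j i = A i j}) ∩
          ⋂ (v : Fin k → ℝ), {A : Fin k → Fin k → ℝ | 0 ≤ ∑ i, v i * ∑ j, A i j * v j} := by
      ext A
      simp only [Set.mem_setOf_eq, Set.mem_inter_iff, Set.mem_iInter]
      constructor
      · intro hA
        refine ⟨fun i j => ?_, fun v => ?_⟩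
        · have := hA.1
          have := congrFun (congrFun this i) j
          simpa [Matrix.conjTranspose_apply] using this
        · have := (Matrix.posSemidef_iff_dotProduct_mulVec.1 hA).2 v
          simpa [dotProduct, Matrix.mulVec, Finset.mul_sum] using this
      · intro hA
        refine Matrix.posSemidef_iff_dotProduct_mulVec.2 ⟨?_, ?_⟩
        · funext i j
          simpa [Matrix.conjTranspose_apply] using hA.1 i j
        · intro v
          have := hA.2 v
          simpa [dotProduct, Matrix.mulVec, Finset.mul_sum] using this
    rw [heq]
    refine IsClosed.inter (isClosed_iInter fun i => isClosed_iInter fun j => ?_)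
      (isClosed_iInter fun v => ?_)
    · exact isClosed_eq (((continuous_apply i).comp (continuous_apply j)))
        (((continuous_apply j).comp (continuous_apply i)))
    · refine isClosed_le continuous_const ?_
      refine continuous_finset_sum _ fun i _ => Continuous.mul continuous_const ?_
      exact continuous_finset_sum _ fun j _ =>
        Continuous.mul ((continuous_apply j).comp (continuous_apply i)) continuous_const
  have hKclosed : IsClosed K := by
    rw [hK]
    exact IsClosed.prod hPSDclosed (Submodule.closed_of_finiteDimensional W2E)
  have hKcone : ∀ (c : ℝ), 0 ≤ c → ∀ z ∈ K, c • z ∈ K := by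
    intro c hc z hz
    rw [hKmem] at hz ⊢
    exact ⟨RRad3.posSemidef_smul' hz.1 hc, W2E.smul_mem c hz.2⟩
  have hKker : ∀ z ∈ K, T z = 0 → z = 0 := by
    intro z hz hTz
    rw [hKmem] at hz
    obtain ⟨w, hwW2, hwE⟩ := Submodule.mem_map.1 hz.2
    rw [hTapp, ← hwE] at hTz
    have hzero : Φ z.1 + w = 0 := by
      refine hinj (V2.add_mem (hΦV2 z.1) hwW2.2) V2.zero_mem ?_
      simp only [map_add, map_zero]
      exact hTz
    have hΦrr : Φ z.1 ∈ realRadical I := by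
      have : Φ z.1 = -w := eq_neg_of_add_eq_zero_left hzero
      rw [this]
      exact RRad.realRadical_neg I hwW2.1
    have hA0 : z.1 = 0 := hAzero z.1 hz.1 hΦrr
    have hw0 : w = 0 := by
      have : Φ z.1 = 0 := by rw [hA0, map_zero]
      rw [this, zero_add] at hzero
      exact hzero
    have hz2 : z.2 = 0 := by rw [← hwE, hw0, map_zero]
    exact Prod.ext hA0 hz2
  have hKconvex : Convex ℝ K := by
    intro x hx y hy a b ha hb hab
    rw [hKmem] at hx hy ⊢
    constructor
    · have h1 := RRad3.posSemidef_smul' hx.1 ha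
      have h2 := RRad3.posSemidef_smul' hy.1 hb
      have : Matrix.of (a • x + b • y).1 = Matrix.of (a • x.1) + Matrix.of (b • y.1) := rfl
      rw [this]
      exact Matrix.PosSemidef.add h1 h2
    · exact W2E.add_mem (W2E.smul_mem a hx.2) (W2E.smul_mem b hy.2)
  have hTKclosed : IsClosed (⇑T '' K) := RRad4.closed_image_of_cone T K hKclosed hKcone hKker
  have hTKconvex : Convex ℝ (⇑T '' K) := hKconvex.linear_image T
  -- the separated point
  have hpnotin : cL (-(p * p)) ∉ ⇑T '' K := by
    rintro ⟨z, hzK, hzT⟩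
    rw [hKmem] at hzK
    obtain ⟨w, hwW2, hwE⟩ := Submodule.mem_map.1 hzK.2
    rw [hTapp, ← hwE, ← map_add] at hzT
    have hppV2 : -(p * p) ∈ V2 := V2.neg_mem (hmemV2 hpdeg hpdeg)
    have heq2 : Φ z.1 + w = -(p * p) :=
      hinj (V2.add_mem (hΦV2 z.1) hwW2.2) hppV2 hzT
    obtain ⟨N, hN, hΦA, hNB⟩ := hAsos z.1 hzK.1
    have hprr : p * p + Φ z.1 ∈ realRadical I := by
      have key : p * p + Φ z.1 = -w := by linear_combination heq2
      rw [key]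
      exact RRad.realRadical_neg I hwW2.1
    have hss : IsSumSq (∑ j, (∑ lx, N j lx • cb lx) ^ 2) :=
      RRad.IsSumSq.sum fun i _ => RRad.IsSumSq.sq' _
    have : p ∈ realRadical I := by
      refine RRad.real_realRadical I hss ?_
      rw [← hΦA, sq]
      exact hprr
    exact hpnot this
  -- separation
  obtain ⟨fE, u, hfu, hux⟩ := geometric_hahn_banach_closed_point hTKconvex hTKclosed hpnotin
  have h0mem : (0 : RRad2.TupSp n (2 * d)) ∈ ⇑T '' K := by
    refine ⟨0, ?_, map_zero T⟩
    rw [hKmem]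
    exact ⟨Matrix.PosSemidef.zero, W2E.zero_mem⟩
  have hu0 : 0 < u := by
    have := hfu 0 h0mem
    simpa using this
  have hfnonpos : ∀ y ∈ ⇑T '' K, fE y ≤ 0 := by
    intro y hy
    by_contra hpos
    push_neg at hpos
    obtain ⟨z, hzK, hzT⟩ := hy
    have hc : (0:ℝ) ≤ (u + 1) / fE y := by positivity
    have hmem : ((u + 1) / fE y) • y ∈ ⇑T '' K := by
      refine ⟨((u + 1) / fE y) • z, hKcone _ hc z hzK, ?_⟩
      rw [map_smul, hzT]
    have := hfu _ hmem
    rw [map_smul] at this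
    simp only [smul_eq_mul] at this
    rw [div_mul_cancel₀ _ (ne_of_gt hpos)] at this
    linarith
  -- the functional μ
  set muL : MvPolynomial (Fin n) ℝ →ₗ[ℝ] ℝ := -(fE.toLinearMap.comp cL) with hmuL
  have hmuapp : ∀ g, muL g = -(fE (cL g)) := fun g => rfl
  have hmuW2 : ∀ w ∈ W2, muL w = 0 := by
    intro w hw
    have hmem : ∀ w' ∈ W2, cL w' ∈ ⇑T '' K := by
      intro w' hw'
      refine ⟨(0, cL w'), ?_, ?_⟩
      · rw [hKmem]
        exact ⟨Matrix.PosSemidef.zero, Submodule.mem_map.2 ⟨w', hw', rfl⟩⟩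
      · rw [hTapp]
        simp
    have h1 := hfnonpos _ (hmem w hw)
    have h2 := hfnonpos _ (hmem (-w) (W2.neg_mem hw))
    rw [map_neg, map_neg] at h2
    rw [hmuapp]
    linarith
  have hmuB : ∀ (s : ℕ) (qf : Fin s → MvPolynomial (Fin n) ℝ), (∀ j, qf j ∈ B) →
      0 ≤ muL (∑ j, qf j ^ 2) := by
    intro s qf hqf
    obtain ⟨A, hA, hΦA⟩ := hsosA s qf hqf
    have hmem : cL (∑ j, qf j ^ 2) ∈ ⇑T '' K := by
      refine ⟨(A, 0), ?_, ?_⟩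
      · rw [hKmem]
        exact ⟨hA, W2E.zero_mem⟩
      · rw [hTapp]
        simp [hΦA]
    have := hfnonpos _ hmem
    rw [hmuapp]
    linarith
  have hmu_sq : ∀ q : MvPolynomial (Fin n) ℝ, q.totalDegree ≤ d → 0 ≤ muL (q * q) := by
    intro q hq
    obtain ⟨b, hbB, w, hwW, hqbw⟩ := hdecomp q
      ((MvPolynomial.mem_restrictTotalDegree (Fin n) d q).2 hq)
    have hwrr : w ∈ realRadical I := hwW.1
    have hwdeg : w.totalDegree ≤ d := (MvPolynomial.mem_restrictTotalDegree (Fin n) d w).1 hwW.2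
    have hbdeg : b.totalDegree ≤ d := hdegB hbB
    have hrest : b * w + (w * b + w * w) ∈ W2 := by
      refine W2.add_mem ?_ (W2.add_mem ?_ ?_)
      · exact ⟨RRad.realRadical_mul_left I b hwrr, hmemV2 hbdeg hwdeg⟩
      · refine ⟨?_, hmemV2 hwdeg hbdeg⟩
        rw [mul_comm]
        exact RRad.realRadical_mul_left I b hwrr
      · exact ⟨RRad.realRadical_mul_left I w hwrr, hmemV2 hwdeg hwdeg⟩
    have hsplit : q * q = b * b + (b * w + (w * b + w * w)) := by
      rw [hqbw]; ring
    rw [hsplit, map_add, hmuW2 _ hrest, add_zero]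
    have hb2 : 0 ≤ muL (∑ j : Fin 1, (fun _ => b) j ^ 2) := hmuB 1 (fun _ => b) (fun _ => hbB)
    simpa [sq] using hb2
  have hmu_p : 0 < muL (p * p) := by
    rw [hmuapp]
    simp only [map_neg] at hux
    linarith
  have hmu_f : ∀ i, ∀ α : Fin n →₀ ℕ, (α.sum fun _ e => e) ≤ d →
      muL (MvPolynomial.monomial α 1 * f i) = 0 := by
    intro i α hα
    refine hmuW2 _ ⟨?_, ?_⟩
    · refine RRad.ideal_subset_realRadical I ?_
      exact Ideal.mul_mem_left I _ (Ideal.subset_span ⟨i, rfl⟩)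
    · refine hmemV2 ?_ (hdeg i)
      rw [MvPolynomial.totalDegree_monomial _ (one_ne_zero)]
      exact hα
  have hmu1 : 0 ≤ muL 1 := by
    have := hmu_sq 1 (by simp [MvPolynomial.totalDegree_one])
    simpa using this
  -- the perturbed functional
  have hc0pos : (0:ℝ) < 1 + muL 1 := by linarith
  set lam : MvPolynomial (Fin n) ℝ →ₗ[ℝ] ℝ := (1 + muL 1)⁻¹ • (l + muL) with hlam
  have hlamapp : ∀ g, lam g = (1 + muL 1)⁻¹ * (l g + muL g) := fun g => rfl
  have hlam1 : lam 1 = 1 := by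
    rw [hlamapp, hl1, inv_mul_cancel₀ (ne_of_gt hc0pos)]
  have hlampsd : ∀ q : MvPolynomial (Fin n) ℝ, q.totalDegree ≤ d → 0 ≤ lam (q * q) := by
    intro q hq
    rw [hlamapp]
    have h1 := hpsd q hq
    have h2 := hmu_sq q hq
    have h3 : (0:ℝ) ≤ (1 + muL 1)⁻¹ := le_of_lt (inv_pos.2 hc0pos)
    nlinarith
  have hlamf : ∀ i, ∀ α : Fin n →₀ ℕ, (α.sum fun _ e => e) ≤ d →
      lam (MvPolynomial.monomial α 1 * f i) = 0 := by
    intro i α hα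
    rw [hlamapp, hkerf i α hα, hmu_f i α hα]
    simp
  have hrank := hmax lam hlam1 hlampsd hlamf
  -- kernel comparison
  have hkerle : LinearMap.ker (momentMap n d lam) ≤ LinearMap.ker (momentMap n d l) := by
    intro Q hQ
    rw [LinearMap.mem_ker, RRad5.momentMap_eq_zero_iff] at hQ ⊢
    have hQdeg : (Q : MvPolynomial (Fin n) ℝ).totalDegree ≤ d :=
      (MvPolynomial.mem_restrictTotalDegree (Fin n) d _).1 Q.2
    have hQQlam : lam ((Q : MvPolynomial (Fin n) ℝ) * (Q : MvPolynomial (Fin n) ℝ)) = 0 :=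
      RRad5.l_mul_eq_zero lam hQdeg hQ
    have hQQl : l ((Q : MvPolynomial (Fin n) ℝ) * (Q : MvPolynomial (Fin n) ℝ)) = 0 := by
      rw [hlamapp] at hQQlam
      have h1 := hpsd _ hQdeg
      have h2 := hmu_sq _ hQdeg
      have h3 : l ((Q : MvPolynomial (Fin n) ℝ) * (Q : MvPolynomial (Fin n) ℝ))
          + muL ((Q : MvPolynomial (Fin n) ℝ) * (Q : MvPolynomial (Fin n) ℝ)) = 0 := by
        have hne : (1 + muL 1)⁻¹ ≠ 0 := inv_ne_zero (ne_of_gt hc0pos)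
        field_simp at hQQlam
        linarith [hQQlam]
      linarith
    exact RRad5.psd_kernel_step l hpsd hQdeg hQQl
  have hkereq : LinearMap.ker (momentMap n d lam) = LinearMap.ker (momentMap n d l) := by
    refine Submodule.eq_of_le_of_finrank_le hkerle ?_
    have h1 := LinearMap.finrank_range_add_finrank_ker (momentMap n d lam)
    have h2 := LinearMap.finrank_range_add_finrank_ker (momentMap n d l)
    have : momentRank n d lam ≤ momentRank n d l := hrank
    unfold momentRank at this
    omega
  -- p is in both kernels
  set P : ↥Vd := ⟨p, (MvPolynomial.mem_restrictTotalDegree (Fin n) d p).2 hpdeg⟩ with hP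
  have hPl : P ∈ LinearMap.ker (momentMap n d l) := by
    rw [LinearMap.mem_ker, RRad5.momentMap_eq_zero_iff]
    exact hpker
  have hPlam : P ∈ LinearMap.ker (momentMap n d lam) := by
    rw [hkereq]
    exact hPl
  rw [LinearMap.mem_ker, RRad5.momentMap_eq_zero_iff] at hPlam
  have hplam : lam (p * p) = 0 := RRad5.l_mul_eq_zero lam hpdeg hPlam
  have hpl : l (p * p) = 0 := RRad5.l_mul_eq_zero l hpdeg hpker
  rw [hlamapp, hpl, zero_add] at hplam
  have : muL (p * p) = 0 := by
    have hne : (1 + muL 1)⁻¹ ≠ 0 := inv_ne_zero (ne_of_gt hc0pos)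
    exact (mul_eq_zero.1 hplam).resolve_left hne
  linarith
end

section
/- Let λ : ℝ[x]_{≤2d} → ℝ be a linear functional whose truncated moment matrix M(λ) is positive semidefinite. Let m ≥ 1 be an integer and p, q_1,…,q_s ∈ ℝ[x] with 2m·deg(p) ≤ d and 2·deg(q_j) ≤ d for each j, and set f := p^{2m} + Σ_{j=1}^s q_j² (so deg f ≤ d). If M(λ)·vec(f) = 0, then M(λ)·vec(p) = 0. -/
open MvPolynomial

/-- Cauchy–Schwarz-style lemma: if `l` is PSD on degree-≤d polynomials and
`l (a*a) = 0`, then `l (a*b) = 0` for any `b` of degree ≤ d. -/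
lemma cs_zero_aux (n d : ℕ) (l : MvPolynomial (Fin n) ℝ →ₗ[ℝ] ℝ)
    (hpsd : ∀ q : MvPolynomial (Fin n) ℝ, q.totalDegree ≤ d → 0 ≤ l (q * q))
    (a b : MvPolynomial (Fin n) ℝ) (ha : a.totalDegree ≤ d) (hb : b.totalDegree ≤ d)
    (h0 : l (a * a) = 0) : l (a * b) = 0 := by
  by_contra hc
  set c := l (a * b) with hcdef
  have hba : l (b * a) = c := by rw [mul_comm]
  have key : ∀ t : ℝ, 0 ≤ 2 * t * c + l (b * b) := by
    intro t
    have hdeg : (t • a + b).totalDegree ≤ d :=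
      le_trans (totalDegree_add _ _)
        (max_le (le_trans (totalDegree_smul_le _ _) ha) hb)
    have hps := hpsd _ hdeg
    have expand : (t • a + b) * (t • a + b)
        = (t * t) • (a * a) + (t • (a * b) + (t • (b * a) + b * b)) := by
      simp only [smul_eq_C_mul, map_mul]
      ring
    rw [expand] at hps
    simp only [map_add, map_smul, smul_eq_mul, h0, mul_zero, zero_add, hba, ← hcdef] at hps
    linarith
  have h2c : (2 : ℝ) * c ≠ 0 := by
    intro h; exact hc (by linarith [mul_eq_zero.mp h |>.resolve_left (by norm_num)])
  have := key ((-(l (b * b)) - 1) / (2 * c))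
  have heq : 2 * ((-(l (b * b)) - 1) / (2 * c)) * c = -(l (b * b)) - 1 := by
    field_simp
  rw [heq] at this
  linarith

/-- If the truncated moment matrix `M(λ)` of level `d` is positive
semidefinite and `f = p^(2m) + Σⱼ qⱼ²` (with `2m·deg p ≤ d`, `2·deg qⱼ ≤ d`, `m ≥ 1`)
lies in the kernel of `M(λ)`, then so does `p`. -/
theorem kernel_moment_matrix_realRadical_like
    (n d : ℕ) (l : MvPolynomial (Fin n) ℝ →ₗ[ℝ] ℝ)
    (hpsd : ∀ q : MvPolynomial (Fin n) ℝ, q.totalDegree ≤ d → 0 ≤ l (q * q))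
    (m : ℕ) (hm : 1 ≤ m) (s : ℕ)
    (p : MvPolynomial (Fin n) ℝ) (q : Fin s → MvPolynomial (Fin n) ℝ)
    (hp : 2 * m * p.totalDegree ≤ d) (hq : ∀ j, 2 * (q j).totalDegree ≤ d)
    (f : MvPolynomial (Fin n) ℝ) (hf : f = p ^ (2 * m) + ∑ j, q j ^ 2)
    (hker : ∀ α : Fin n →₀ ℕ, (α.sum fun _ e => e) ≤ d →
      l (MvPolynomial.monomial α 1 * f) = 0) :
    ∀ α : Fin n →₀ ℕ, (α.sum fun _ e => e) ≤ d →
      l (MvPolynomial.monomial α 1 * p) = 0 := by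
  -- degree bounds on powers of p
  have hdegpow : ∀ k, k ≤ 2 * m → (p ^ k).totalDegree ≤ d := by
    intro k hk
    refine le_trans (totalDegree_pow _ _) (le_trans ?_ hp)
    exact Nat.mul_le_mul_right _ hk
  -- l (p ^ (2m)) = 0
  have h2m : l (p ^ (2 * m)) = 0 := by
    have hf0 := hker 0 (by simp)
    rw [show ((MvPolynomial.monomial (0 : Fin n →₀ ℕ)) (1:ℝ)) = 1 by simp, one_mul,
      hf, map_add, map_sum] at hf0
    have hppos : 0 ≤ l (p ^ (2 * m)) := by
      have := hpsd (p ^ m) (hdegpow m (by omega))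
      rwa [← pow_add, show m + m = 2 * m by ring] at this
    have hqpos : ∀ j, 0 ≤ l (q j ^ 2) := by
      intro j
      have := hpsd (q j) (by have := hq j; omega)
      rwa [← sq] at this
    have hsum : 0 ≤ ∑ j, l (q j ^ 2) := Finset.sum_nonneg fun j _ => hqpos j
    linarith
  -- downward induction: l (p ^ (2k)) = 0 for 1 ≤ k ≤ m
  have key : ∀ j k, k + j = m → 1 ≤ k → l (p ^ (2 * k)) = 0 := by
    intro j
    induction j with
    | zero => intro k hk _; rw [show k = m by omega]; exact h2m
    | succ i ih =>
      intro k hk hk1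
      have hnext : l (p ^ (2 * (k + 1))) = 0 := ih (k + 1) (by omega) (by omega)
      have haa : l (p ^ (k + 1) * p ^ (k + 1)) = 0 := by
        rwa [← pow_add, show (k+1) + (k+1) = 2 * (k+1) by ring]
      have := cs_zero_aux n d l hpsd (p ^ (k + 1)) (p ^ (k - 1))
        (hdegpow _ (by omega)) (hdegpow _ (by omega)) haa
      rwa [← pow_add, show (k+1) + (k-1) = 2 * k by omega] at this
  have hp2 : l (p * p) = 0 := by
    have := key (m - 1) 1 (by omega) le_rfl
    rwa [show 2 * 1 = 1 + 1 by ring, pow_add, pow_one] at this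
  intro α hα
  have hmono : (MvPolynomial.monomial α (1 : ℝ)).totalDegree ≤ d := by
    rw [totalDegree_monomial α (one_ne_zero)]
    exact hα
  have hpd : p.totalDegree ≤ d := by
    have h1 : (p ^ 1).totalDegree ≤ d := hdegpow 1 (by omega)
    rwa [pow_one] at h1
  have := cs_zero_aux n d l hpsd p (MvPolynomial.monomial α 1) hpd hmono hp2
  rwa [mul_comm] at this
end

section
/- Every nonempty face F of the positive semidefinite cone S₊^k is of the form F = { U M Uᵀ : M ∈ S₊^r } for some integer 0 ≤ r ≤ k and some k×r real matrix U with orthonormal columns (the cases r = 0 and r = k giving F = {0} and F = S₊^k respectively). -/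
open Matrix

/-- `F` is a face of the cone `S₊^k` of `k × k` real positive semidefinite matrices:
it is a convex cone contained in `S₊^k` such that whenever `X, Y ∈ S₊^k` and
`X + Y ∈ F`, both `X ∈ F` and `Y ∈ F`. -/
def IsFaceOfPSDCone (k : ℕ) (F : Set (Matrix (Fin k) (Fin k) ℝ)) : Prop :=
  (∀ X ∈ F, X.PosSemidef) ∧
  (∀ X ∈ F, ∀ Y ∈ F, X + Y ∈ F) ∧
  (∀ c : ℝ, 0 ≤ c → ∀ X ∈ F, c • X ∈ F) ∧
  (∀ X Y : Matrix (Fin k) (Fin k) ℝ, X.PosSemidef → Y.PosSemidef →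
    X + Y ∈ F → X ∈ F ∧ Y ∈ F)

lemma quad_bound {n : ℕ} (M : Matrix (Fin n) (Fin n) ℝ) (x : Fin n → ℝ) :
    x ⬝ᵥ M *ᵥ x ≤ (∑ i, ∑ j, |M i j|) * (x ⬝ᵥ x) := by
  have hS : ∀ i : Fin n, x i ^ 2 ≤ x ⬝ᵥ x := by
    intro i
    have : x ⬝ᵥ x = ∑ l, x l ^ 2 := by simp [dotProduct, sq]
    rw [this]
    exact Finset.single_le_sum (fun l _ => sq_nonneg (x l)) (Finset.mem_univ i)
  have hexp : x ⬝ᵥ M *ᵥ x = ∑ i, ∑ j, x i * (M i j * x j) := by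
    simp [dotProduct, mulVec, Finset.mul_sum]
  rw [hexp, Finset.sum_mul]
  refine Finset.sum_le_sum fun i _ => ?_
  rw [Finset.sum_mul]
  refine Finset.sum_le_sum fun j _ => ?_
  have h1 := hS i
  have h2 := hS j
  have h3 : |x i * x j| ≤ x ⬝ᵥ x := by
    rw [abs_mul]
    nlinarith [abs_nonneg (x i), abs_nonneg (x j), sq_abs (x i), sq_abs (x j),
      sq_nonneg (|x i| - |x j|)]
  calc x i * (M i j * x j) = M i j * (x i * x j) := by ring
      _ ≤ |M i j * (x i * x j)| := le_abs_self _
      _ = |M i j| * |x i * x j| := abs_mul _ _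
      _ ≤ |M i j| * (x ⬝ᵥ x) := mul_le_mul_of_nonneg_left h3 (abs_nonneg _)

lemma exists_smul_diag_sub_psd {r : ℕ} (d : Fin r → ℝ) (hd : ∀ a, 0 < d a)
    (M : Matrix (Fin r) (Fin r) ℝ) (hM : M.IsHermitian) :
    ∃ c : ℝ, 0 ≤ c ∧ (c • Matrix.diagonal d - M).PosSemidef := by
  rcases isEmpty_or_nonempty (Fin r) with hr | hr
  · refine ⟨0, le_refl _, posSemidef_iff_dotProduct_mulVec.mpr ⟨?_, ?_⟩⟩
    · ext i j; exact isEmptyElim i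
    · intro y; simp [dotProduct]
  · set d0 : ℝ := Finset.univ.inf' Finset.univ_nonempty d with hd0
    have hd0pos : 0 < d0 := by
      obtain ⟨a, _, ha⟩ := Finset.exists_mem_eq_inf' Finset.univ_nonempty d
      rw [hd0, ha]; exact hd a
    set t : ℝ := ∑ i, ∑ j, |M i j| with ht
    have htnn : 0 ≤ t := Finset.sum_nonneg fun i _ =>
      Finset.sum_nonneg fun j _ => abs_nonneg _
    refine ⟨t / d0, div_nonneg htnn hd0pos.le, posSemidef_iff_dotProduct_mulVec.mpr ⟨?_, ?_⟩⟩
    · have h1 : (Matrix.diagonal d).IsHermitian := isHermitian_diagonal d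
      have h2 : ((t / d0) • Matrix.diagonal d).IsHermitian := by
        show _ᴴ = _
        rw [conjTranspose_smul, h1.eq]
        simp
      exact h2.sub hM
    · intro y
      have hstar : star y = y := by simp
      rw [hstar, sub_mulVec, dotProduct_sub, smul_mulVec, dotProduct_smul]
      have hquad : y ⬝ᵥ (Matrix.diagonal d) *ᵥ y = ∑ a, d a * (y a * y a) := by
        simp only [dotProduct, mulVec_diagonal]
        exact Finset.sum_congr rfl fun a _ => by ring
      have hbound := quad_bound M y
      have hdion : d0 * (y ⬝ᵥ y) ≤ y ⬝ᵥ (Matrix.diagonal d) *ᵥ y := by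
        rw [hquad]
        have : y ⬝ᵥ y = ∑ a, y a * y a := by simp [dotProduct]
        rw [this, Finset.mul_sum]
        refine Finset.sum_le_sum fun a _ => ?_
        have := Finset.inf'_le d (Finset.mem_univ a)
        nlinarith [mul_self_nonneg (y a)]
      have hynn : 0 ≤ y ⬝ᵥ y := by
        have : y ⬝ᵥ y = ∑ a, y a * y a := by simp [dotProduct]
        rw [this]; exact Finset.sum_nonneg fun a _ => mul_self_nonneg _
      have hc : (t / d0) * (d0 * (y ⬝ᵥ y)) = t * (y ⬝ᵥ y) := by
        field_simp
      have hmm := mul_le_mul_of_nonneg_left hdion (div_nonneg htnn hd0pos.le)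
      rw [← ht] at hbound
      simp only [smul_eq_mul]
      linarith [hbound, hmm, hc]

/-- Every nonempty face `F` of `S₊^k` has the form
`F = { U M Uᵀ : M ∈ S₊^r }` for some `0 ≤ r ≤ k` and some `k × r` matrix `U` with
orthonormal columns (`r = 0` gives `F = {0}`, `r = k` gives `F = S₊^k`). -/
theorem face_of_PSD_cone_structure (k : ℕ) (F : Set (Matrix (Fin k) (Fin k) ℝ))
    (hF : IsFaceOfPSDCone k F) (hne : F.Nonempty) :
    ∃ (r : ℕ), r ≤ k ∧ ∃ U : Matrix (Fin k) (Fin r) ℝ,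
      Uᵀ * U = 1 ∧
      F = {X : Matrix (Fin k) (Fin k) ℝ |
        ∃ M : Matrix (Fin r) (Fin r) ℝ, M.PosSemidef ∧ X = U * M * Uᵀ} := by
  classical
  obtain ⟨hFpsd, hFadd, hFsmul, hFface⟩ := hF
  -- a maximal-rank element of F
  obtain ⟨A, hAF, hArank⟩ : ∃ A ∈ F, ∀ X ∈ F, X.rank ≤ A.rank := by
    have hSne : (Matrix.rank '' F).Nonempty := hne.image _
    have hSbdd : BddAbove (Matrix.rank '' F) := by
      refine ⟨k, ?_⟩
      rintro n ⟨X, -, rfl⟩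
      exact X.rank_le_card_width.trans (by simp)
    obtain ⟨A, hAF, hA⟩ := Nat.sSup_mem hSne hSbdd
    exact ⟨A, hAF, fun X hX => hA ▸ le_csSup hSbdd ⟨X, hX, rfl⟩⟩
  have hApsd : A.PosSemidef := hFpsd A hAF
  have hH : A.IsHermitian := hApsd.isHermitian
  set V : Matrix (Fin k) (Fin k) ℝ := (hH.eigenvectorUnitary : Matrix (Fin k) (Fin k) ℝ) with hV
  set μ : Fin k → ℝ := hH.eigenvalues with hμ
  have hmem := Unitary.mem_iff.mp hH.eigenvectorUnitary.2
  have hWV : star V * V = 1 := hmem.1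
  have hVW : V * star V = 1 := hmem.2
  have hspec : A = V * Matrix.diagonal μ * star V := by
    have h := hH.spectral_theorem
    rwa [Unitary.conjStarAlgAut_apply, RCLike.ofReal_real_eq_id, Function.id_comp] at h
  have hμnn : ∀ i, 0 ≤ μ i := fun i => hApsd.eigenvalues_nonneg i
  -- the index set of nonzero eigenvalues
  set r : ℕ := Fintype.card {i : Fin k // μ i ≠ 0} with hr
  have hrk : r ≤ k := by
    rw [hr]
    exact le_trans (Fintype.card_subtype_le _) (le_of_eq (Fintype.card_fin k))
  set e : Fin r ≃ {i : Fin k // μ i ≠ 0} := (Fintype.equivFin {i : Fin k // μ i ≠ 0}).symm with he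
  set ι : Fin r → Fin k := fun a => (e a).1 with hιdef
  have hι : Function.Injective ι := fun a b h => e.injective (Subtype.ext h)
  have hμι : ∀ a, 0 < μ (ι a) := fun a => lt_of_le_of_ne (hμnn _) (Ne.symm (e a).2)
  -- summing only over nonzero eigenvalues
  have stepA : ∀ g : Fin k → ℝ, (∀ i, μ i = 0 → g i = 0) →
      ∑ i, g i = ∑ a : Fin r, g (ι a) := by
    intro g hg
    have h1 : ∑ a : Fin r, g (ι a) = ∑ x : {i : Fin k // μ i ≠ 0}, g x.1 :=
      Equiv.sum_comp e (fun x => g x.1)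
    have h2 : ∑ x : {i : Fin k // μ i ≠ 0}, g x.1
        = ∑ i ∈ Finset.univ.filter (fun i => μ i ≠ 0), g i :=
      (Finset.sum_subtype _ (by simp) g).symm
    rw [h1, h2, Finset.sum_filter_of_ne]
    intro i _ hgi
    intro h0
    exact hgi (hg i h0)
  set U : Matrix (Fin k) (Fin r) ℝ := V.submatrix id ι with hU
  have hstarV : ∀ i j, (star V) i j = V j i := by
    intro i j
    simp [Matrix.star_eq_conjTranspose, Matrix.conjTranspose_apply]
  have hUH : Uᴴ = Uᵀ := by
    ext a p
    simp [Matrix.conjTranspose_apply]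
  have hUTH : (Uᵀ)ᴴ = U := by
    ext p a
    simp [Matrix.conjTranspose_apply]
  have hUU : Uᵀ * U = 1 := by
    ext a b
    have h := congrFun (congrFun (congrArg (fun M => M) hWV) (ι a)) (ι b)
    have h' : (star V * V) (ι a) (ι b) = (1 : Matrix (Fin k) (Fin k) ℝ) (ι a) (ι b) := by
      rw [hWV]
    rw [Matrix.mul_apply] at h'
    simp only [hstarV] at h'
    rw [Matrix.mul_apply, Matrix.one_apply]
    simp only [Matrix.transpose_apply, hU, Matrix.submatrix_apply, id]
    rw [h', Matrix.one_apply]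
    by_cases hab : a = b
    · simp [hab]
    · have : ι a ≠ ι b := fun hc => hab (hι hc)
      simp [hab, this]
  -- A = U D Uᵀ with D the diagonal of nonzero eigenvalues
  have hentryA : ∀ p q, A p q = ∑ i, V p i * μ i * V q i := by
    intro p q
    rw [hspec, Matrix.mul_apply]
    refine Finset.sum_congr rfl fun i _ => ?_
    rw [Matrix.mul_diagonal, hstarV]
  have hAdecomp : A = U * Matrix.diagonal (fun a => μ (ι a)) * Uᵀ := by
    ext p q
    rw [hentryA p q, stepA _ (fun i h0 => by rw [h0]; ring)]
    rw [Matrix.mul_apply]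
    refine Finset.sum_congr rfl fun a _ => ?_
    rw [Matrix.mul_diagonal]
    simp only [hU, Matrix.submatrix_apply, Matrix.transpose_apply, id]
  refine ⟨r, hrk, U, hUU, ?_⟩
  ext X
  simp only [Set.mem_setOf_eq]
  constructor
  · -- F ⊆ { U M Uᵀ }
    intro hX
    have hXpsd : X.PosSemidef := hFpsd X hX
    have hXsymm : ∀ p q, X p q = X q p := by
      intro p q
      conv_lhs => rw [← hXpsd.1]
      simp [Matrix.conjTranspose_apply]
    have hsumF : X + A ∈ F := hFadd X hX A hAF
    have hsumpsd : (X + A).PosSemidef := hFpsd _ hsumF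
    have hranksum : (X + A).rank ≤ A.rank := hArank _ hsumF
    have hsplit : ∀ v : Fin k → ℝ, (X + A) *ᵥ v = 0 → X *ᵥ v = 0 ∧ A *ᵥ v = 0 := by
      intro v hv
      have hsv : star v = v := by
        funext i; exact star_trivial _
      have hXnn : 0 ≤ v ⬝ᵥ X *ᵥ v := by have := hXpsd.dotProduct_mulVec_nonneg v; rwa [hsv] at this
      have hAnn : 0 ≤ v ⬝ᵥ A *ᵥ v := by have := hApsd.dotProduct_mulVec_nonneg v; rwa [hsv] at this
      have h0 : v ⬝ᵥ X *ᵥ v + v ⬝ᵥ A *ᵥ v = 0 := by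
        have h1 : v ⬝ᵥ ((X + A) *ᵥ v) = 0 := by rw [hv, dotProduct_zero]
        rwa [Matrix.add_mulVec, dotProduct_add] at h1
      constructor
      · exact (hXpsd.dotProduct_mulVec_zero_iff v).mp (by rw [hsv]; linarith)
      · exact (hApsd.dotProduct_mulVec_zero_iff v).mp (by rw [hsv]; linarith)
    have hker : ∀ v : Fin k → ℝ, A *ᵥ v = 0 → X *ᵥ v = 0 := by
      intro v hv
      have hle : LinearMap.ker (X + A).mulVecLin ≤ LinearMap.ker A.mulVecLin := by
        intro w hw
        rw [LinearMap.mem_ker, Matrix.mulVecLin_apply] at hw ⊢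
        exact (hsplit w hw).2
      have e1 : (X + A).rank + Module.finrank ℝ (LinearMap.ker (X + A).mulVecLin) = k := by
        have := LinearMap.finrank_range_add_finrank_ker (X + A).mulVecLin
        rwa [Module.finrank_pi, Fintype.card_fin] at this
      have e2 : A.rank + Module.finrank ℝ (LinearMap.ker A.mulVecLin) = k := by
        have := LinearMap.finrank_range_add_finrank_ker A.mulVecLin
        rwa [Module.finrank_pi, Fintype.card_fin] at this
      have hfr : Module.finrank ℝ (LinearMap.ker A.mulVecLin)
          ≤ Module.finrank ℝ (LinearMap.ker (X + A).mulVecLin) := by omega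
      have heq : LinearMap.ker (X + A).mulVecLin = LinearMap.ker A.mulVecLin :=
        Submodule.eq_of_le_of_finrank_le hle hfr
      have hv' : v ∈ LinearMap.ker A.mulVecLin := by
        rw [LinearMap.mem_ker, Matrix.mulVecLin_apply]; exact hv
      rw [← heq, LinearMap.mem_ker, Matrix.mulVecLin_apply] at hv'
      exact (hsplit v hv').1
    -- columns of V with zero eigenvalue are killed by X
    have hXV : ∀ i, μ i = 0 → ∀ p, (X * V) p i = 0 := by
      intro i h0 p
      have hAv : A *ᵥ (fun s => V s i) = 0 := by
        have hAV : A * V = V * Matrix.diagonal μ := by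
          rw [hspec, Matrix.mul_assoc, hWV, Matrix.mul_one]
        funext p'
        have : (A * V) p' i = (V * Matrix.diagonal μ) p' i := by rw [hAV]
        rw [Matrix.mul_diagonal, h0, mul_zero] at this
        simpa [Matrix.mulVec, dotProduct, Matrix.mul_apply] using this
      have := hker _ hAv
      have := congrFun this p
      simpa [Matrix.mulVec, dotProduct, Matrix.mul_apply] using this
    set Y : Matrix (Fin k) (Fin k) ℝ := star V * X * V with hY
    have hYH : Y.IsHermitian := by
      rw [hY, Matrix.star_eq_conjTranspose]
      exact Matrix.isHermitian_conjTranspose_mul_mul V hXpsd.1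
    have hY0 : ∀ i j, μ i = 0 ∨ μ j = 0 → Y i j = 0 := by
      have hright : ∀ i j, μ j = 0 → Y i j = 0 := by
        intro i j h0
        rw [hY, Matrix.mul_assoc, Matrix.mul_apply]
        refine Finset.sum_eq_zero fun p _ => ?_
        rw [hXV j h0 p, mul_zero]
      intro i j hij
      rcases hij with h0 | h0
      · have : Y j i = 0 := hright j i h0
        have hsym : Y i j = Y j i := by
          conv_lhs => rw [← hYH]
          simp [Matrix.conjTranspose_apply]
        rw [hsym, this]
      · exact hright i j h0
    have hXdecomp : X = V * Y * star V := by
      rw [hY]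
      rw [show V * (star V * X * V) * star V = (V * star V) * X * (V * star V) by
        simp only [Matrix.mul_assoc]]
      rw [hVW, Matrix.one_mul, Matrix.mul_one]
    refine ⟨Uᵀ * X * U, ?_, ?_⟩
    · have := hXpsd.mul_mul_conjTranspose_same Uᵀ
      rwa [hUTH] at this
    · -- X = U (Uᵀ X U) Uᵀ
      have hMY : ∀ a b, (Uᵀ * X * U) a b = Y (ι a) (ι b) := by
        intro a b
        rw [Matrix.mul_apply, hY, Matrix.mul_apply]
        refine Finset.sum_congr rfl fun q _ => ?_
        rw [Matrix.mul_apply, Matrix.mul_apply]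
        simp only [hU, Matrix.submatrix_apply, Matrix.transpose_apply, id, hstarV]
      ext p q
      have hXe : X p q = ∑ j, ∑ i, V p i * Y i j * V q j := by
        conv_lhs => rw [hXdecomp]
        rw [Matrix.mul_apply]
        refine Finset.sum_congr rfl fun j _ => ?_
        rw [Matrix.mul_apply, hstarV, Finset.sum_mul]
      rw [hXe]
      rw [stepA _ (fun j h0 => Finset.sum_eq_zero fun i _ => by
        rw [hY0 i j (Or.inr h0)]; ring)]
      have hinner : ∀ b : Fin r, ∑ i, V p i * Y i (ι b) * V q (ι b)
          = ∑ a : Fin r, V p (ι a) * Y (ι a) (ι b) * V q (ι b) := by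
        intro b
        exact stepA _ (fun i h0 => by rw [hY0 i (ι b) (Or.inl h0)]; ring)
      rw [Finset.sum_congr rfl fun b _ => hinner b]
      rw [Matrix.mul_apply]
      refine Finset.sum_congr rfl fun b _ => ?_
      rw [Matrix.mul_apply, Finset.sum_mul]
      refine Finset.sum_congr rfl fun a _ => ?_
      rw [hMY a b]
      simp only [hU, Matrix.submatrix_apply, Matrix.transpose_apply, id]
  · -- { U M Uᵀ } ⊆ F
    rintro ⟨M, hMpsd, rfl⟩
    obtain ⟨c, hc, hNpsd⟩ := exists_smul_diag_sub_psd (fun a => μ (ι a)) hμι M hMpsd.1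
    set N : Matrix (Fin r) (Fin r) ℝ := c • Matrix.diagonal (fun a => μ (ι a)) - M with hN
    have hXpsd : (U * M * Uᵀ).PosSemidef := by
      have := hMpsd.mul_mul_conjTranspose_same U
      rwa [hUH] at this
    have hYpsd : (U * N * Uᵀ).PosSemidef := by
      have := hNpsd.mul_mul_conjTranspose_same U
      rwa [hUH] at this
    have hsum : U * M * Uᵀ + U * N * Uᵀ = c • A := by
      rw [hAdecomp]
      rw [hN]
      rw [← Matrix.add_mul, ← Matrix.mul_add]
      rw [show M + (c • Matrix.diagonal (fun a => μ (ι a)) - M)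
        = c • Matrix.diagonal (fun a => μ (ι a)) by abel]
      rw [Matrix.mul_smul, Matrix.smul_mul]
    have hcA : c • A ∈ F := hFsmul c hc A hAF
    exact (hFface _ _ hXpsd hYpsd (by rw [hsum]; exact hcA)).1
end

section
/- (Facial reduction step) Let A_1,…,A_l ∈ S^k, let 𝒜(X) = (⟨A₁,X⟩,…,⟨A_l,X⟩), let b ∈ ℝ^l, and let F be a nonempty face of S₊^k. Suppose X ∈ F satisfies 𝒜(X) = b, and suppose y ∈ ℝ^l satisfies bᵀy = 0 and Z := 𝒜*(y) = Σᵢ yᵢAᵢ ∈ F* \ F^⊥. Then ⟨Z, X⟩ = 0, so X ∈ {Z}^⊥ ∩ F; moreover {Z}^⊥ ∩ F is a proper subset of F. -/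
open Matrix

/-- facial reduction step.  Let `F` be a nonempty face of `S₊^k`,
let `X ∈ F` satisfy `𝒜(X) = b`, and let `y` satisfy `bᵀy = 0` with
`Z := 𝒜*(y) = Σᵢ yᵢ Aᵢ ∈ F* \ F^⊥`.  Then `⟨Z, X⟩ = 0`, so `X ∈ {Z}^⊥ ∩ F`;
moreover `{Z}^⊥ ∩ F` is a proper subset of `F`. -/
theorem facial_reduction_step (k l : ℕ)
    (A : Fin l → Matrix (Fin k) (Fin k) ℝ) (hA : ∀ i, (A i).IsSymm)
    (b : Fin l → ℝ)
    (F : Set (Matrix (Fin k) (Fin k) ℝ)) (hF : IsFaceOfPSDCone k F) (hne : F.Nonempty)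
    (X : Matrix (Fin k) (Fin k) ℝ) (hXF : X ∈ F)
    (hAX : ∀ i, (A i * X).trace = b i)
    (y : Fin l → ℝ) (hby : b ⬝ᵥ y = 0)
    (Z : Matrix (Fin k) (Fin k) ℝ) (hZ : Z = ∑ i, y i • A i)
    -- `Z ∈ F*` : nonnegative trace inner product with every element of `F`
    (hZdual : ∀ Y ∈ F, 0 ≤ (Z * Y).trace)
    -- `Z ∉ F^⊥` : `Z` is not orthogonal to all of `F`
    (hZperp : ¬ (∀ Y ∈ F, (Z * Y).trace = 0)) :
    (Z * X).trace = 0 ∧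
    X ∈ {Y : Matrix (Fin k) (Fin k) ℝ | (Z * Y).trace = 0} ∩ F ∧
    ({Y : Matrix (Fin k) (Fin k) ℝ | (Z * Y).trace = 0} ∩ F) ⊂ F := by
  have htr : (Z * X).trace = 0 := by
    rw [hZ, Finset.sum_mul, trace_sum]
    have : ∀ i ∈ Finset.univ, ((y i • A i) * X).trace = b i * y i := by
      intro i _
      rw [smul_mul_assoc, trace_smul, hAX i, smul_eq_mul, mul_comm]
    rw [Finset.sum_congr rfl this, ← dotProduct, hby]
  refine ⟨htr, ⟨htr, hXF⟩, ?_⟩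
  rw [Set.ssubset_iff_of_subset Set.inter_subset_right]
  push_neg at hZperp
  obtain ⟨Y, hYF, hY⟩ := hZperp
  exact ⟨Y, hYF, fun h => hY h.1⟩
end

section
/- (Theorem of the alternative) Let A_1,…,A_l ∈ S^k, let 𝒜(X) = (⟨A₁,X⟩,…,⟨A_l,X⟩), and let b ∈ ℝ^l. Assume the feasible set F_P = { X ∈ S^k : 𝒜(X) = b, X ⪰ 0 } is nonempty. Then exactly one of the following two systems is consistent: (I) there exists P ≻ 0 (positive definite) with 𝒜(P) = b (the Slater condition); (II) there exists y ∈ ℝ^l with bᵀy = 0 such that Z := 𝒜*(y) = Σᵢ yᵢAᵢ is positive semidefinite and Z ≠ 0. -/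
open Matrix


set_option maxHeartbeats 1000000 in
lemma psd_trace_zero {n : ℕ} {M : Matrix (Fin n) (Fin n) ℝ}
    (hM : M.PosSemidef) (h : M.trace = 0) : M = 0 := by
  obtain ⟨S, hS, rfl⟩ : ∃ S : Matrix (Fin n) (Fin n) ℝ, S.IsHermitian ∧ S * S = M :=
    by open scoped MatrixOrder in exact ⟨CFC.sqrt M, (CFC.sqrt_nonneg M).posSemidef.1,
      CFC.sqrt_mul_sqrt_self M hM.nonneg⟩
  have hsym : ∀ i j, S j i = S i j := fun i j => by
    have := congrFun (congrFun hS.eq i) j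
    simpa [Matrix.conjTranspose_apply] using this
  have htr : (S * S).trace = ∑ i, ∑ j, S i j * S i j := by
    rw [Matrix.trace]
    simp only [Matrix.diag, Matrix.mul_apply]
    exact Finset.sum_congr rfl fun i _ => Finset.sum_congr rfl fun j _ => by rw [hsym i j]
  rw [htr] at h
  have hzero := (Finset.sum_eq_zero_iff_of_nonneg
    (fun i _ => Finset.sum_nonneg fun j _ => mul_self_nonneg (S i j))).1 h
  have hS0 : S = 0 := by
    ext i j
    have := (Finset.sum_eq_zero_iff_of_nonneg
      (fun j _ => mul_self_nonneg (S i j))).1 (hzero i (Finset.mem_univ i)) j (Finset.mem_univ j)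
    simpa using mul_self_eq_zero.1 this
  rw [hS0, mul_zero]

set_option maxHeartbeats 1000000 in
lemma psd_pd_trace_eq_zero {n : ℕ} {Z P : Matrix (Fin n) (Fin n) ℝ}
    (hZ : Z.PosSemidef) (hP : P.PosDef) (h : (Z * P).trace = 0) : Z = 0 := by
  obtain ⟨S, hS, hherm, rfl⟩ : ∃ S : Matrix (Fin n) (Fin n) ℝ,
      S.PosSemidef ∧ Sᴴ = S ∧ S * S = Z :=
    by open scoped MatrixOrder in exact ⟨CFC.sqrt Z, (CFC.sqrt_nonneg Z).posSemidef,
      (CFC.sqrt_nonneg Z).posSemidef.1.eq, CFC.sqrt_mul_sqrt_self Z hZ.nonneg⟩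
  have hN : (S * P * S).PosSemidef := by
    have := hP.posSemidef.conjTranspose_mul_mul_same S
    rwa [hherm] at this
  have htr : (S * P * S).trace = 0 := by
    rw [Matrix.trace_mul_cycle]; exact h
  have hN0 : S * P * S = 0 := psd_trace_zero hN htr
  have hSv : ∀ x : Fin n → ℝ, S *ᵥ x = 0 := by
    intro x
    by_contra hx
    have hpos := hP.dotProduct_mulVec_pos hx
    rw [star_trivial] at hpos
    have hT : Sᵀ = S := by
      ext i j
      simpa [Matrix.conjTranspose_apply] using congrFun (congrFun hherm i) j
    have hvm : x ᵥ* S = S *ᵥ x := by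
      nth_rewrite 1 [← hT]
      exact Matrix.vecMul_transpose S x
    have heq : x ⬝ᵥ ((S * P * S) *ᵥ x) = (S *ᵥ x) ⬝ᵥ (P *ᵥ (S *ᵥ x)) := by
      rw [mul_assoc, ← Matrix.mulVec_mulVec, Matrix.dotProduct_mulVec, hvm,
        ← Matrix.mulVec_mulVec]
    rw [← heq, hN0] at hpos
    simp at hpos
  have hS0 : S = 0 := by
    ext i j
    have := congrFun (hSv (Pi.single j 1)) i
    simpa [Matrix.mulVec_single] using this
  rw [hS0, mul_zero]

open Matrix

noncomputable section SDPAux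

variable {k l : ℕ}

/-- Embedding of matrices into Euclidean space. -/
def matEmb (k : ℕ) (M : Matrix (Fin k) (Fin k) ℝ) : EuclideanSpace ℝ (Fin k × Fin k) :=
  (WithLp.equiv 2 _).symm (fun p => M p.1 p.2)

@[simp] lemma matEmb_apply (M : Matrix (Fin k) (Fin k) ℝ) (p : Fin k × Fin k) :
    matEmb k M p = M p.1 p.2 := rfl

lemma matEmb_add (M N : Matrix (Fin k) (Fin k) ℝ) :
    matEmb k (M + N) = matEmb k M + matEmb k N := rfl

lemma matEmb_smul (c : ℝ) (M : Matrix (Fin k) (Fin k) ℝ) :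
    matEmb k (c • M) = c • matEmb k M := rfl

lemma matEmb_zero : matEmb k (0 : Matrix (Fin k) (Fin k) ℝ) = 0 := rfl

/-- quadratic form of a vectorized matrix -/
def qf (k : ℕ) (v : Fin k × Fin k → ℝ) (x : Fin k → ℝ) : ℝ :=
  ∑ p : Fin k × Fin k, x p.1 * v p * x p.2

lemma qf_add (v w : Fin k × Fin k → ℝ) (x : Fin k → ℝ) :
    qf k (v + w) x = qf k v x + qf k w x := by
  simp [qf, mul_add, add_mul, Finset.sum_add_distrib]

lemma qf_smul (c : ℝ) (v : Fin k × Fin k → ℝ) (x : Fin k → ℝ) :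
    qf k (c • v) x = c * qf k v x := by
  simp only [qf, Finset.mul_sum, Pi.smul_apply, smul_eq_mul]
  exact Finset.sum_congr rfl fun p _ => by ring

lemma qf_smul_x (c : ℝ) (v : Fin k × Fin k → ℝ) (x : Fin k → ℝ) :
    qf k v (c • x) = c ^ 2 * qf k v x := by
  simp only [qf, Finset.mul_sum, Pi.smul_apply, smul_eq_mul]
  exact Finset.sum_congr rfl fun p _ => by ring

lemma qf_abs_le (v : Fin k × Fin k → ℝ) (x : Fin k → ℝ) (hx : ∀ i, |x i| ≤ 1) :
    |qf k v x| ≤ ∑ p : Fin k × Fin k, |v p| := by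
  refine (Finset.abs_sum_le_sum_abs _ _).trans ?_
  refine Finset.sum_le_sum fun p _ => ?_
  have h1 : |x p.1 * v p * x p.2| = |x p.1| * |v p| * |x p.2| := by
    rw [abs_mul, abs_mul]
  rw [h1]
  calc |x p.1| * |v p| * |x p.2| ≤ 1 * |v p| * 1 := by
        apply mul_le_mul (mul_le_mul (hx p.1) le_rfl (abs_nonneg _) zero_le_one) (hx p.2)
          (abs_nonneg _)
        positivity
    _ = |v p| := by ring

lemma qf_matEmb (M : Matrix (Fin k) (Fin k) ℝ) (x : Fin k → ℝ) :
    qf k (matEmb k M) x = x ⬝ᵥ (M *ᵥ x) := by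
  simp only [qf, matEmb_apply, dotProduct, Matrix.mulVec, Finset.mul_sum,
    Fintype.sum_prod_type]
  exact Finset.sum_congr rfl fun i _ => Finset.sum_congr rfl fun j _ => by ring

lemma coord_le_norm {ι : Type*} [Fintype ι] (v : EuclideanSpace ℝ ι) (i : ι) :
    |v i| ≤ ‖v‖ := by
  rw [EuclideanSpace.norm_eq]
  have h1 : |v i| = Real.sqrt (‖v i‖ ^ 2) := by
    rw [Real.sqrt_sq_eq_abs, Real.norm_eq_abs, abs_abs]
  rw [h1]
  apply Real.sqrt_le_sqrt
  exact Finset.single_le_sum (fun j _ => sq_nonneg ‖v j‖) (Finset.mem_univ i)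

lemma sum_prod_trace (N M : Matrix (Fin k) (Fin k) ℝ) :
    ∑ p : Fin k × Fin k, N p.2 p.1 * M p.1 p.2 = (N * M).trace := by
  rw [Fintype.sum_prod_type, Finset.sum_comm]
  simp only [Matrix.trace, Matrix.diag, Matrix.mul_apply]

lemma dotProduct_self_pos' {x : Fin k → ℝ} (hx : x ≠ 0) :
    0 < ∑ i, x i * x i := by
  rcases Function.ne_iff.1 hx with ⟨i, hi⟩
  have hi' : x i ≠ 0 := by simpa using hi
  have : (0:ℝ) < x i * x i := mul_self_pos.mpr hi'
  refine lt_of_lt_of_le this ?_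
  exact Finset.single_le_sum (fun j _ => mul_self_nonneg (x j)) (Finset.mem_univ i)

lemma trace_sum_smul_mul (y : Fin l → ℝ) (A : Fin l → Matrix (Fin k) (Fin k) ℝ)
    (P : Matrix (Fin k) (Fin k) ℝ) :
    ((∑ i, y i • A i) * P).trace = ∑ i, y i * (A i * P).trace := by
  rw [Finset.sum_mul]
  simp [smul_mul_assoc, Matrix.trace_sum, Matrix.trace_smul, smul_eq_mul]

set_option maxHeartbeats 1000000 in
lemma isOpen_Uset (hk : 0 < k) :
    IsOpen {v : EuclideanSpace ℝ (Fin k × Fin k) |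
      ∀ x : Fin k → ℝ, x ≠ 0 → 0 < qf k v x} := by
  refine Metric.isOpen_iff.2 fun v hv => ?_
  have hsc : IsCompact (Metric.sphere (0 : EuclideanSpace ℝ (Fin k)) 1) := isCompact_sphere _ _
  have hsne : (Metric.sphere (0 : EuclideanSpace ℝ (Fin k)) 1).Nonempty := by
    refine ⟨EuclideanSpace.single ⟨0, hk⟩ 1, ?_⟩
    simp [mem_sphere_zero_iff_norm]
  have hcont : Continuous fun x : EuclideanSpace ℝ (Fin k) => qf k v x := by
    unfold qf
    exact continuous_finset_sum _ fun p _ =>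
      (((EuclideanSpace.proj p.1).continuous).mul continuous_const).mul
        (EuclideanSpace.proj p.2).continuous
  obtain ⟨x₀, hx₀S, hminOn⟩ := hsc.exists_isMinOn hsne hcont.continuousOn
  have hmin : ∀ x' ∈ Metric.sphere (0 : EuclideanSpace ℝ (Fin k)) 1,
      qf k v x₀ ≤ qf k v x' := fun x' hx' => hminOn hx'
  have hx₀ne : x₀ ≠ 0 := by
    intro h
    have := mem_sphere_zero_iff_norm.1 hx₀S
    rw [h] at this
    simp at this
  have hεpos : 0 < qf k v x₀ := hv x₀ ((WithLp.ofLp_eq_zero 2).not.2 hx₀ne)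
  set ε := qf k v x₀ with hεdef
  refine ⟨ε / (k * k + 1), by positivity, fun w hw => ?_⟩
  have hdist : dist w v < ε / (k * k + 1) := Metric.mem_ball.1 hw
  intro x hx
  set xe : EuclideanSpace ℝ (Fin k) := (WithLp.equiv 2 _).symm x with hxedef
  have hxene : xe ≠ 0 := (WithLp.toLp_eq_zero 2).not.2 hx
  have hn : 0 < ‖xe‖ := norm_pos_iff.2 hxene
  set u : EuclideanSpace ℝ (Fin k) := ‖xe‖⁻¹ • xe with hudef
  have huS : u ∈ Metric.sphere (0 : EuclideanSpace ℝ (Fin k)) 1 := by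
    rw [mem_sphere_zero_iff_norm, hudef, norm_smul, Real.norm_eq_abs, abs_inv, abs_norm]
    exact inv_mul_cancel₀ hn.ne'
  have hmin_u : ε ≤ qf k v u := hmin u huS
  have hucoord : ∀ i, |u i| ≤ 1 := fun i => by
    have := coord_le_norm u i
    rwa [mem_sphere_zero_iff_norm.1 huS] at this
  have hqd : |qf k (w - v) u| ≤ ∑ p : Fin k × Fin k, |(w - v) p| := qf_abs_le _ _ hucoord
  have hsum : ∑ p : Fin k × Fin k, |(w - v) p| ≤ (k * k : ℝ) * dist w v := by
    calc ∑ p : Fin k × Fin k, |(w - v) p| ≤ ∑ _p : Fin k × Fin k, dist w v := by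
          refine Finset.sum_le_sum fun p _ => ?_
          have h2 := coord_le_norm (w - v) p
          rwa [← dist_eq_norm] at h2
      _ = (k * k : ℝ) * dist w v := by
          rw [Finset.sum_const, Finset.card_univ]
          simp [Fintype.card_prod, nsmul_eq_mul]
  have hsplit : qf k w u = qf k v u + qf k (w - v) u := by
    rw [← qf_add]
    congr 1
    simp
  have hq_u_pos : 0 < qf k w u := by
    have habs := neg_abs_le (qf k (w - v) u)
    have hkk : (0:ℝ) ≤ (k * k : ℝ) := by positivity
    have hd0 : 0 ≤ dist w v := dist_nonneg
    have hdist' : dist w v * (k * k + 1) < ε := by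
      rw [← lt_div_iff₀ (by positivity : (0:ℝ) < (k*k:ℝ) + 1)]
      exact hdist
    linarith [hmin_u, hqd, hsum, habs, hsplit]
  have hxu : x = ‖xe‖ • (fun i => u i) := by
    funext i
    have : u i = ‖xe‖⁻¹ * x i := rfl
    simp [this, Pi.smul_apply, smul_eq_mul]
    field_simp
  rw [hxu, qf_smul_x]
  exact mul_pos (pow_pos hn 2) hq_u_pos


end SDPAux

noncomputable section SDPMain
open Matrix

set_option maxHeartbeats 1600000 in
lemma alt_construction {k l : ℕ} (hk : 0 < k) (A : Fin l → Matrix (Fin k) (Fin k) ℝ)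
    (hA : ∀ i, (A i).IsSymm) (b : Fin l → ℝ) (X₀ : Matrix (Fin k) (Fin k) ℝ)
    (hX₀ : X₀.PosSemidef) (hX₀c : ∀ i, (A i * X₀).trace = b i)
    (hI : ¬ ∃ P : Matrix (Fin k) (Fin k) ℝ, P.PosDef ∧ ∀ i, (A i * P).trace = b i) :
    ∃ y : Fin l → ℝ, b ⬝ᵥ y = 0 ∧ (∑ i, y i • A i).PosSemidef ∧ (∑ i, y i • A i) ≠ 0 := by
  classical
  set U : Set (EuclideanSpace ℝ (Fin k × Fin k)) :=
    {v | ∀ x : Fin k → ℝ, x ≠ 0 → 0 < qf k v x} with hUdef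
  set T : Set (EuclideanSpace ℝ (Fin k × Fin k)) :=
    {v | ∀ i, ∑ p : Fin k × Fin k, (A i) p.2 p.1 * v p = b i} with hTdef
  have hUopen : IsOpen U := isOpen_Uset hk
  have hUconv : Convex ℝ U := by
    intro v hv w hw a c ha hc hac
    intro x hx
    have h1 : qf k (a • v + c • w) x = a * qf k v x + c * qf k w x := by
      rw [qf_add, qf_smul, qf_smul]
    rw [WithLp.ofLp_add, WithLp.ofLp_smul, WithLp.ofLp_smul, h1]
    have h2 := hv x hx
    have h3 := hw x hx
    rcases ha.lt_or_eq with ha' | ha'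
    · nlinarith
    · have hc1 : c = 1 := by rw [← ha'] at hac; simpa using hac
      rw [← ha', hc1]; simpa using h3
  have hTconv : Convex ℝ T := by
    intro v hv w hw a c ha hc hac
    intro i
    have h1 : ∀ p : Fin k × Fin k, (A i) p.2 p.1 * (a • v + c • w) p
        = a * ((A i) p.2 p.1 * v p) + c * ((A i) p.2 p.1 * w p) := fun p => by
      have : (a • v + c • w) p = a * v p + c * w p := rfl
      rw [this]; ring
    rw [Finset.sum_congr rfl fun p _ => h1 p, Finset.sum_add_distrib, ← Finset.mul_sum,
      ← Finset.mul_sum, hv i, hw i]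
    linear_combination b i * hac
  have hdisj : Disjoint U T := by
    rw [Set.disjoint_left]
    intro v hvU hvT
    apply hI
    refine ⟨Matrix.of fun i j => (v (i, j) + v (j, i)) / 2,
      Matrix.PosDef.of_dotProduct_mulVec_pos ?_ ?_, ?_⟩
    · ext i j
      simp only [Matrix.conjTranspose_apply, Matrix.of_apply, star_trivial]
      ring
    · intro x hx
      have hq := hvU x hx
      rw [star_trivial]
      have heq : x ⬝ᵥ ((Matrix.of fun i j => (v (i, j) + v (j, i)) / 2) *ᵥ x) = qf k v x := by
        have hswap : ∑ p : Fin k × Fin k, x p.1 * v (p.2, p.1) * x p.2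
            = ∑ p : Fin k × Fin k, x p.1 * v p * x p.2 := by
          refine Fintype.sum_equiv (Equiv.prodComm (Fin k) (Fin k)) _ _ fun p => ?_
          simp only [Equiv.prodComm_apply, Prod.swap, Prod.fst, Prod.snd]
          ring
        have expand : x ⬝ᵥ ((Matrix.of fun i j => (v (i, j) + v (j, i)) / 2) *ᵥ x)
            = ∑ p : Fin k × Fin k,
                (x p.1 * v p * x p.2 + x p.1 * v (p.2, p.1) * x p.2) / 2 := by
          rw [Fintype.sum_prod_type]
          simp only [dotProduct, Matrix.mulVec, Matrix.of_apply, Finset.mul_sum]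
          exact Finset.sum_congr rfl fun i _ => Finset.sum_congr rfl fun j _ => by ring
        have hcomb : ∑ p : Fin k × Fin k,
              (x p.1 * v p * x p.2 + x p.1 * v (p.2, p.1) * x p.2) / 2
            = ((∑ p : Fin k × Fin k, x p.1 * v p * x p.2)
                + ∑ p : Fin k × Fin k, x p.1 * v (p.2, p.1) * x p.2) / 2 := by
          rw [← Finset.sum_add_distrib, Finset.sum_div]
        rw [expand, hcomb, hswap, qf]
        ring
      rw [heq]; exact hq
    · intro i
      have hc := hvT i
      rw [← sum_prod_trace]
      have hswap2 : ∑ p : Fin k × Fin k, A i p.2 p.1 * v (p.2, p.1)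
          = ∑ p : Fin k × Fin k, A i p.2 p.1 * v p := by
        refine Fintype.sum_equiv (Equiv.prodComm (Fin k) (Fin k)) _ _ fun p => ?_
        simp only [Equiv.prodComm_apply, Prod.swap, Prod.fst, Prod.snd]
        rw [(hA i).apply]
      have hcomb2 : ∑ p : Fin k × Fin k,
            (A i p.2 p.1 * v p + A i p.2 p.1 * v (p.2, p.1)) / 2
          = ((∑ p : Fin k × Fin k, A i p.2 p.1 * v p)
              + ∑ p : Fin k × Fin k, A i p.2 p.1 * v (p.2, p.1)) / 2 := by
        rw [← Finset.sum_add_distrib, Finset.sum_div]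
      have hpt : ∑ p : Fin k × Fin k,
            A i p.2 p.1 * ((Matrix.of fun i j => (v (i, j) + v (j, i)) / 2) p.1 p.2)
          = ∑ p : Fin k × Fin k,
            (A i p.2 p.1 * v p + A i p.2 p.1 * v (p.2, p.1)) / 2 := by
        refine Finset.sum_congr rfl fun p _ => ?_
        simp only [Matrix.of_apply, Prod.mk.eta]
        ring
      rw [hpt, hcomb2, hswap2, hc]
      ring
  have h1U : matEmb k (1 : Matrix (Fin k) (Fin k) ℝ) ∈ U := by
    intro x hx
    rw [qf_matEmb]
    simpa [Matrix.one_mulVec, dotProduct] using dotProduct_self_pos' hx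
  have hv₀T : matEmb k X₀ ∈ T := by
    intro i
    simpa only [matEmb_apply] using (sum_prod_trace (A i) X₀).trans (hX₀c i)
  obtain ⟨f, u, hfU, hfT⟩ := geometric_hahn_banach_open hUconv hUopen hTconv hdisj
  have hle : ∀ M : Matrix (Fin k) (Fin k) ℝ, M.PosSemidef → f (matEmb k M) ≤ u := by
    intro M hM
    have key : ∀ t : ℝ, 0 < t → f (matEmb k M) + t * f (matEmb k 1) < u := by
      intro t ht
      have hmem : matEmb k M + t • matEmb k 1 ∈ U := by
        intro x hx
        have h2 : qf k (matEmb k M + t • matEmb k 1) x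
            = qf k (matEmb k M) x + t * qf k (matEmb k 1) x := by
          rw [qf_add, qf_smul]
        rw [WithLp.ofLp_add, WithLp.ofLp_smul, h2, qf_matEmb, qf_matEmb]
        have h3 : 0 ≤ x ⬝ᵥ (M *ᵥ x) := by simpa [star_trivial] using hM.dotProduct_mulVec_nonneg x
        have h4 : 0 < x ⬝ᵥ ((1 : Matrix (Fin k) (Fin k) ℝ) *ᵥ x) := by
          simpa [Matrix.one_mulVec, dotProduct] using dotProduct_self_pos' hx
        nlinarith
      have := hfU _ hmem
      simpa [map_add, _root_.map_smul, smul_eq_mul] using this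
    by_contra hgt
    push_neg at hgt
    have ht : 0 < (f (matEmb k M) - u) / (2 * (|f (matEmb k 1)| + 1)) := by
      have : 0 < f (matEmb k M) - u := by linarith
      positivity
    have hkey := key _ ht
    have h6 := neg_abs_le (f (matEmb k 1))
    set a := f (matEmb k M)
    set c := f (matEmb k 1)
    have hden : (0:ℝ) < 2 * (|c| + 1) := by positivity
    set t := (a - u) / (2 * (|c| + 1)) with htdef
    have htc : t * (2 * (|c| + 1)) = a - u := div_mul_cancel₀ _ hden.ne'
    nlinarith [mul_le_mul_of_nonneg_left h6 ht.le]
  have hu0 : 0 ≤ u := by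
    have := hle 0 Matrix.PosSemidef.zero
    rw [matEmb_zero, map_zero] at this
    linarith
  have hle0 : ∀ M : Matrix (Fin k) (Fin k) ℝ, M.PosSemidef → f (matEmb k M) ≤ 0 := by
    intro M hM
    by_contra hpos
    push_neg at hpos
    have hsymM : ∀ i j, M j i = M i j := fun i j => by
      have := congrFun (congrFun hM.1 i) j
      simpa [Matrix.conjTranspose_apply] using this
    have hsmul : (((u + 1) / f (matEmb k M)) • M).PosSemidef := by
      refine Matrix.PosSemidef.of_dotProduct_mulVec_nonneg ?_ ?_
      · ext i j
        simp only [Matrix.conjTranspose_apply, Matrix.smul_apply, star_trivial, smul_eq_mul]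
        rw [hsymM i j]
      · intro x
        have h8 := hM.dotProduct_mulVec_nonneg x
        rw [Matrix.smul_mulVec, dotProduct_smul]
        exact smul_nonneg (by positivity) h8
    have h9 := hle _ hsmul
    rw [matEmb_smul, f.map_smul, smul_eq_mul, div_mul_cancel₀ _ hpos.ne'] at h9
    linarith
  have hcu : u ≤ f (matEmb k X₀) := hfT _ hv₀T
  have hc0 : f (matEmb k X₀) ≤ 0 := hle0 _ hX₀
  have hu : u = 0 := le_antisymm (le_trans hcu hc0) hu0
  have hfX₀ : f (matEmb k X₀) = 0 := le_antisymm hc0 (hu ▸ hcu)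
  have hfT0 : ∀ v ∈ T, f v = 0 := by
    intro v hv
    have h1 : 0 ≤ f v := by have := hfT v hv; rwa [hu] at this
    have h2 : (2 : ℝ) • matEmb k X₀ - v ∈ T := by
      intro i
      have hv' := hv i
      have hx' := hv₀T i
      have h3 : ∀ p : Fin k × Fin k, (A i) p.2 p.1 * ((2 : ℝ) • matEmb k X₀ - v) p
          = 2 * ((A i) p.2 p.1 * (matEmb k X₀) p) - (A i) p.2 p.1 * v p := fun p => by
        have : ((2 : ℝ) • matEmb k X₀ - v) p = 2 * (matEmb k X₀) p - v p := rfl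
        rw [this]; ring
      rw [Finset.sum_congr rfl fun p _ => h3 p, Finset.sum_sub_distrib, ← Finset.mul_sum,
        hx', hv']
      ring
    have h3 := hfT _ h2
    rw [hu, map_sub] at h3
    have h4 : f ((2 : ℝ) • matEmb k X₀) = 0 := by rw [f.map_smul, hfX₀, smul_zero]
    rw [h4] at h3
    linarith
  -- Riesz representation
  obtain ⟨z, hz⟩ : ∃ z : EuclideanSpace ℝ (Fin k × Fin k),
      ∀ v : EuclideanSpace ℝ (Fin k × Fin k), f v = ∑ p : Fin k × Fin k, z p * v p := by
    refine ⟨(InnerProductSpace.toDual ℝ (EuclideanSpace ℝ (Fin k × Fin k))).symm f, fun v => ?_⟩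
    have h := InnerProductSpace.toDual_symm_apply (𝕜 := ℝ)
      (E := EuclideanSpace ℝ (Fin k × Fin k)) (y := f) (x := v)
    rw [← h, PiLp.inner_apply]
    simp [RCLike.inner_apply, conj_trivial, mul_comm]
  set Z : Matrix (Fin k) (Fin k) ℝ := Matrix.of (fun i j => -((z (i, j) + z (j, i)) / 2))
    with hZdef
  have hZapp : ∀ i j, Z i j = -((z (i, j) + z (j, i)) / 2) := fun i j => rfl
  have hZsym : ∀ i j : Fin k, Z j i = Z i j := fun i j => by rw [hZapp, hZapp]; ring
  have hZeval : ∀ M : Matrix (Fin k) (Fin k) ℝ, (∀ i j, M j i = M i j) →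
      ∑ p : Fin k × Fin k, Z p.1 p.2 * M p.1 p.2 = - f (matEmb k M) := by
    intro M hM
    have h2 : ∑ p : Fin k × Fin k, z (p.2, p.1) * M p.1 p.2
        = ∑ p : Fin k × Fin k, z p * M p.1 p.2 := by
      refine Fintype.sum_equiv (Equiv.prodComm (Fin k) (Fin k)) _ _ fun p => ?_
      simp only [Equiv.prodComm_apply, Prod.swap, Prod.fst, Prod.snd]
      rw [hM]
    calc ∑ p : Fin k × Fin k, Z p.1 p.2 * M p.1 p.2
        = ∑ p : Fin k × Fin k, ((-(1/2:ℝ)) * (z p * M p.1 p.2)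
            + (-(1/2:ℝ)) * (z (p.2, p.1) * M p.1 p.2)) := by
          refine Finset.sum_congr rfl fun p _ => ?_
          rw [hZapp p.1 p.2]
          simp only [Prod.mk.eta]
          ring
      _ = (-(1/2:ℝ)) * ∑ p : Fin k × Fin k, z p * M p.1 p.2
            + (-(1/2:ℝ)) * ∑ p : Fin k × Fin k, z (p.2, p.1) * M p.1 p.2 := by
          rw [Finset.sum_add_distrib, Finset.mul_sum, Finset.mul_sum]
      _ = - f (matEmb k M) := by
          rw [h2, hz]
          simp only [matEmb_apply]
          ring
  have hZpsd : Z.PosSemidef := by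
    refine Matrix.PosSemidef.of_dotProduct_mulVec_nonneg ?_ ?_
    · ext i j
      simp only [Matrix.conjTranspose_apply, star_trivial]
      exact hZsym i j
    · intro x
      rw [star_trivial]
      have hMx : ∀ i j : Fin k, Matrix.vecMulVec x x j i = Matrix.vecMulVec x x i j :=
        fun i j => by simp only [Matrix.vecMulVec_apply]; ring
      have hpsd : (Matrix.vecMulVec x x).PosSemidef := by
        refine Matrix.PosSemidef.of_dotProduct_mulVec_nonneg ?_ ?_
        · ext i j
          simp only [Matrix.conjTranspose_apply, Matrix.vecMulVec_apply, star_trivial]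
          ring
        · intro y
          rw [star_trivial]
          have hdp : y ⬝ᵥ (Matrix.vecMulVec x x *ᵥ y)
              = (∑ i, y i * x i) * (∑ j, x j * y j) := by
            rw [Finset.sum_mul_sum]
            simp only [dotProduct, Matrix.mulVec, Matrix.vecMulVec_apply, Finset.mul_sum]
            exact Finset.sum_congr rfl fun i _ => Finset.sum_congr rfl fun j _ => by ring
          have hcomm : ∑ j, x j * y j = ∑ i, y i * x i :=
            Finset.sum_congr rfl fun i _ => by ring
          rw [hdp, hcomm]
          exact mul_self_nonneg _
      have hq : x ⬝ᵥ (Z *ᵥ x)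
          = ∑ p : Fin k × Fin k, Z p.1 p.2 * (Matrix.vecMulVec x x) p.1 p.2 := by
        rw [Fintype.sum_prod_type]
        simp only [dotProduct, Matrix.mulVec, Matrix.vecMulVec_apply, Finset.mul_sum]
        exact Finset.sum_congr rfl fun i _ => Finset.sum_congr rfl fun j _ => by ring
      rw [hq, hZeval _ hMx]
      have := hle0 _ hpsd
      linarith
  have hZne : Z ≠ 0 := by
    intro h0
    have h1 : f (matEmb k 1) < u := hfU _ h1U
    rw [hu] at h1
    have h2 := hZeval 1 (fun i j => by simp [Matrix.one_apply, eq_comm])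
    rw [h0] at h2
    simp only [Matrix.zero_apply, zero_mul, Finset.sum_const_zero] at h2
    linarith [h2.symm ▸ h1]
  have hZK : matEmb k Z ∈ Submodule.span ℝ (Set.range fun i => matEmb k (A i)) := by
    set K := Submodule.span ℝ (Set.range fun i => matEmb k (A i)) with hK
    rw [← Submodule.orthogonal_orthogonal K]
    rw [Submodule.mem_orthogonal]
    intro w hw
    have hwA : ∀ i, ∑ p : Fin k × Fin k, A i p.2 p.1 * w p = 0 := by
      intro i
      have hmem : matEmb k (A i) ∈ K := Submodule.subset_span ⟨i, rfl⟩
      have h3 := (Submodule.mem_orthogonal K w).1 hw _ hmem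
      rw [PiLp.inner_apply] at h3
      simp only [RCLike.inner_apply, conj_trivial, matEmb_apply] at h3
      have hsy : ∑ p : Fin k × Fin k, A i p.2 p.1 * w p
          = ∑ p : Fin k × Fin k, A i p.1 p.2 * w p :=
        Finset.sum_congr rfl fun p _ => by rw [(hA i).apply]
      rw [hsy]
      simpa only [mul_comm] using h3
    set ws : Fin k × Fin k → ℝ := fun p => (w p + w (p.2, p.1)) / 2 with hws
    set Ms : Matrix (Fin k) (Fin k) ℝ := Matrix.of fun i j => ws (i, j) with hMs
    have hMsapp : ∀ p : Fin k × Fin k, Ms p.1 p.2 = ws p := fun p => rfl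
    have hMssym : ∀ i j, Ms j i = Ms i j := fun i j => by
      show ws (j, i) = ws (i, j)
      rw [hws]
      ring
    have hwsA : ∀ i, ∑ p : Fin k × Fin k, A i p.2 p.1 * ws p = 0 := by
      intro i
      have hswap3 : ∑ p : Fin k × Fin k, A i p.2 p.1 * w (p.2, p.1)
          = ∑ p : Fin k × Fin k, A i p.2 p.1 * w p := by
        refine Fintype.sum_equiv (Equiv.prodComm (Fin k) (Fin k)) _ _ fun p => ?_
        simp only [Equiv.prodComm_apply, Prod.swap, Prod.fst, Prod.snd]
        rw [(hA i).apply]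
      have hsplit : ∑ p : Fin k × Fin k, A i p.2 p.1 * ws p
          = ((∑ p : Fin k × Fin k, A i p.2 p.1 * w p)
              + ∑ p : Fin k × Fin k, A i p.2 p.1 * w (p.2, p.1)) / 2 := by
        rw [← Finset.sum_add_distrib, Finset.sum_div]
        exact Finset.sum_congr rfl fun p _ => by rw [hws]; ring
      rw [hsplit, hswap3, hwA i]
      ring
    have hMsT : matEmb k X₀ + matEmb k Ms ∈ T := by
      intro i
      have hpt2 : ∀ p : Fin k × Fin k, A i p.2 p.1 * (matEmb k X₀ + matEmb k Ms) p
          = A i p.2 p.1 * matEmb k X₀ p + A i p.2 p.1 * ws p := fun p => by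
        have hp : (matEmb k X₀ + matEmb k Ms) p = X₀ p.1 p.2 + ws p := rfl
        rw [hp, matEmb_apply]
        ring
      rw [Finset.sum_congr rfl fun p _ => hpt2 p, Finset.sum_add_distrib, hwsA i, add_zero]
      exact hv₀T i
    have hfMs : f (matEmb k Ms) = 0 := by
      have h5 := hfT0 _ hMsT
      rw [map_add, hfX₀, zero_add] at h5
      exact h5
    rw [PiLp.inner_apply]
    simp only [RCLike.inner_apply, conj_trivial, matEmb_apply]
    have hstep1 : ∑ p : Fin k × Fin k, w p * Z p.1 p.2
        = ∑ p : Fin k × Fin k, ws p * Z p.1 p.2 := by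
      have hsw : ∑ p : Fin k × Fin k, w (p.2, p.1) * Z p.1 p.2
          = ∑ p : Fin k × Fin k, w p * Z p.1 p.2 := by
        refine Fintype.sum_equiv (Equiv.prodComm (Fin k) (Fin k)) _ _ fun p => ?_
        simp only [Equiv.prodComm_apply, Prod.swap, Prod.fst, Prod.snd]
        rw [hZsym]
      have hsplit2 : ∑ p : Fin k × Fin k, ws p * Z p.1 p.2
          = ((∑ p : Fin k × Fin k, w p * Z p.1 p.2)
              + ∑ p : Fin k × Fin k, w (p.2, p.1) * Z p.1 p.2) / 2 := by
        rw [← Finset.sum_add_distrib, Finset.sum_div]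
        exact Finset.sum_congr rfl fun p _ => by rw [hws]; ring
      rw [hsplit2, hsw]
      ring
    have hstep2 : ∑ p : Fin k × Fin k, ws p * Z p.1 p.2 = - f (matEmb k Ms) := by
      rw [← hZeval Ms hMssym]
      exact Finset.sum_congr rfl fun p _ => by rw [hMsapp]; ring
    rw [show ∑ i : Fin k × Fin k, Z i.1 i.2 * w i = ∑ p : Fin k × Fin k, w p * Z p.1 p.2 from
      Finset.sum_congr rfl fun p _ => mul_comm _ _, hstep1, hstep2, hfMs, neg_zero]
  obtain ⟨y, hy⟩ := (Submodule.mem_span_range_iff_exists_fun ℝ).1 hZK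
  have hyZ : ∑ i, y i • A i = Z := by
    ext i j
    have h6 := congrArg (EuclideanSpace.proj (𝕜 := ℝ) ((i, j) : Fin k × Fin k)) hy
    simp only [map_sum, _root_.map_smul, PiLp.proj_apply, matEmb_apply, smul_eq_mul] at h6
    have h8 : (∑ i', y i' • A i') i j = ∑ i', y i' * A i' i j := by
      simp [Matrix.sum_apply]
    rw [h8]
    exact h6
  have hX₀sym : ∀ i j, X₀ j i = X₀ i j := fun i j => by
    have := congrFun (congrFun hX₀.1 i) j
    simpa [Matrix.conjTranspose_apply] using this
  have h10 : (Z * X₀).trace = - f (matEmb k X₀) := by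
    rw [← sum_prod_trace, ← hZeval X₀ hX₀sym]
    exact Finset.sum_congr rfl fun p _ => by rw [hZsym]
  refine ⟨y, ?_, ?_, ?_⟩
  · calc b ⬝ᵥ y = ∑ i, b i * y i := rfl
      _ = ∑ i, y i * (A i * X₀).trace :=
          Finset.sum_congr rfl fun i _ => by rw [hX₀c i]; ring
      _ = ((∑ i, y i • A i) * X₀).trace := (trace_sum_smul_mul y A X₀).symm
      _ = (Z * X₀).trace := by rw [hyZ]
      _ = 0 := by rw [h10, hfX₀, neg_zero]
  · rw [hyZ]; exact hZpsd
  · rw [hyZ]; exact hZne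

end SDPMain



/-- theorem of the alternative.  Let `𝒜(X) = (⟨A₁,X⟩,…,⟨A_l,X⟩)`
with each `Aᵢ` symmetric, and suppose the feasible set
`F_P = { X : 𝒜(X) = b, X ⪰ 0 }` is nonempty.  Then exactly one of the following holds:
(I) there is a positive definite `P` with `𝒜(P) = b` (Slater condition), or
(II) there is `y` with `bᵀy = 0` such that `Z = Σᵢ yᵢ Aᵢ` is positive semidefinite
and nonzero. -/
theorem sdp_theorem_of_the_alternative (k l : ℕ)
    (A : Fin l → Matrix (Fin k) (Fin k) ℝ) (hA : ∀ i, (A i).IsSymm)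
    (b : Fin l → ℝ)
    (hfeas : ∃ X : Matrix (Fin k) (Fin k) ℝ,
      X.PosSemidef ∧ ∀ i, (A i * X).trace = b i) :
    Xor'
      (∃ P : Matrix (Fin k) (Fin k) ℝ, P.PosDef ∧ ∀ i, (A i * P).trace = b i)
      (∃ y : Fin l → ℝ, b ⬝ᵥ y = 0 ∧
        (∑ i, y i • A i).PosSemidef ∧ (∑ i, y i • A i) ≠ 0) := by
  obtain ⟨X₀, hX₀, hX₀c⟩ := hfeas
  by_cases hI : ∃ P : Matrix (Fin k) (Fin k) ℝ, P.PosDef ∧ ∀ i, (A i * P).trace = b i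
  · left
    refine ⟨hI, ?_⟩
    rintro ⟨y, hby, hZpsd, hZne⟩
    obtain ⟨P, hP, hPc⟩ := hI
    apply hZne
    apply psd_pd_trace_eq_zero hZpsd hP
    rw [trace_sum_smul_mul]
    calc ∑ i, y i * (A i * P).trace = ∑ i, b i * y i :=
        Finset.sum_congr rfl fun i _ => by rw [hPc i]; ring
      _ = b ⬝ᵥ y := rfl
      _ = 0 := hby
  · right
    refine ⟨?_, hI⟩
    rcases Nat.eq_zero_or_pos k with hk0 | hk
    · exfalso
      apply hI
      subst hk0
      exact ⟨X₀, Matrix.PosDef.of_dotProduct_mulVec_pos hX₀.1 fun x hx => absurd (funext fun i => i.elim0) hx, hX₀c⟩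
    · exact alt_construction hk A hA b X₀ hX₀ hX₀c hI
end

section
/- Let U be a real k×r matrix, F = { U M Uᵀ : M ∈ S₊^r }, let A_1,…,A_l ∈ S^k, and let b ∈ ℝ^l. Then there exists y ∈ ℝ^l with bᵀy = 0 such that Z := Σᵢ yᵢ A_i belongs to F* \ F^⊥, if and only if there exists y ∈ ℝ^l with bᵀy = 0 such that Z̄ := Σᵢ yᵢ Uᵀ A_i U is positive semidefinite and Z̄ ≠ 0. -/
open Matrix

lemma aux_trace_psd_nonneg {n : Type*} [Fintype n] {Z : Matrix n n ℝ}
    (hZ : Z.PosSemidef) : 0 ≤ Z.trace := by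
  classical
  rw [Matrix.trace]
  refine Finset.sum_nonneg fun i _ => ?_
  simpa [Matrix.mulVec, dotProduct, Pi.single_apply] using hZ.dotProduct_mulVec_nonneg (Pi.single i 1)

lemma aux_trace_mul_psd_nonneg {n : Type*} [Fintype n] [DecidableEq n]
    {Z M : Matrix n n ℝ} (hZ : Z.PosSemidef) (hM : M.PosSemidef) :
    0 ≤ (Z * M).trace := by
  obtain ⟨B, rfl⟩ : ∃ B : Matrix n n ℝ, M = Bᴴ * B := by
    open scoped MatrixOrder in
    obtain ⟨X, hX, -, hXM⟩ := sub_zero M ▸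
      CFC.exists_sqrt_of_isSelfAdjoint_of_quasispectrumRestricts hM.isHermitian
        (QuasispectrumRestricts.nnreal_of_nonneg hM.nonneg)
    exact ⟨X, by rw [← sub_zero M, ← hXM, ← Matrix.star_eq_conjTranspose, hX.star_eq]⟩
  rw [← Matrix.mul_assoc, Matrix.trace_mul_comm, ← Matrix.mul_assoc]
  exact aux_trace_psd_nonneg (hZ.mul_mul_conjTranspose_same B)

lemma aux_psd_vecMulVec {n : Type*} [Fintype n] (x : n → ℝ) :
    (Matrix.vecMulVec x x).PosSemidef := by
  refine .of_dotProduct_mulVec_nonneg ?_ ?_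
  · ext i j
    simp [Matrix.vecMulVec_apply, mul_comm]
  · intro y
    have : (star y) ⬝ᵥ (Matrix.vecMulVec x x *ᵥ y) = (x ⬝ᵥ y) * (x ⬝ᵥ y) := by
      simp [Matrix.mulVec, dotProduct, Matrix.vecMulVec_apply, Finset.mul_sum,
        Finset.sum_mul, mul_assoc]
      rw [Finset.sum_comm]
      exact Finset.sum_congr rfl fun i _ => Finset.sum_congr rfl fun j _ => by ring
    rw [this]
    exact mul_self_nonneg _

lemma aux_trace_mul_vecMulVec {n : Type*} [Fintype n] (Z : Matrix n n ℝ) (x : n → ℝ) :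
    (Z * Matrix.vecMulVec x x).trace = x ⬝ᵥ (Z *ᵥ x) := by
  simp [Matrix.trace, Matrix.diag, Matrix.mul_apply, Matrix.vecMulVec_apply,
    dotProduct, Matrix.mulVec, Finset.mul_sum]
  exact Finset.sum_congr rfl fun i _ => Finset.sum_congr rfl fun j _ => by ring

lemma aux_eq_zero_of_trace_mul_self {n : Type*} [Fintype n] {Z : Matrix n n ℝ}
    (hs : Zᵀ = Z) (h : (Z * Z).trace = 0) : Z = 0 := by
  have hsym : ∀ i j, Z j i = Z i j := fun i j => by
    conv_lhs => rw [← hs, Matrix.transpose_apply]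
  have h2 : ∑ j, ∑ i, Z i j * Z i j = 0 := by
    rw [← h]
    simp [Matrix.trace, Matrix.diag, Matrix.mul_apply]
    exact Finset.sum_congr rfl fun j _ => Finset.sum_congr rfl fun i _ => by rw [hsym i j]
  ext i j
  have hj := (Finset.sum_eq_zero_iff_of_nonneg (fun j _ =>
    Finset.sum_nonneg fun i _ => mul_self_nonneg (Z i j))).mp h2 j (Finset.mem_univ j)
  have hi := (Finset.sum_eq_zero_iff_of_nonneg (fun i _ => mul_self_nonneg (Z i j))).mp hj i
    (Finset.mem_univ i)
  simpa using mul_self_eq_zero.mp hi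

lemma aux_key {k r l : ℕ} (U : Matrix (Fin k) (Fin r) ℝ)
    (A : Fin l → Matrix (Fin k) (Fin k) ℝ) (y : Fin l → ℝ)
    (M : Matrix (Fin r) (Fin r) ℝ) :
    ((∑ i, y i • A i) * (U * M * Uᵀ)).trace
      = ((∑ i, y i • (Uᵀ * A i * U)) * M).trace := by
  rw [Finset.sum_mul, Finset.sum_mul, Matrix.trace_sum, Matrix.trace_sum]
  refine Finset.sum_congr rfl fun i _ => ?_
  rw [smul_mul_assoc, smul_mul_assoc, Matrix.trace_smul, Matrix.trace_smul]
  congr 1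
  rw [← Matrix.mul_assoc, Matrix.trace_mul_comm, ← Matrix.mul_assoc, ← Matrix.mul_assoc]

lemma aux_symm {k r l : ℕ} (U : Matrix (Fin k) (Fin r) ℝ)
    (A : Fin l → Matrix (Fin k) (Fin k) ℝ) (hA : ∀ i, (A i).IsSymm) (y : Fin l → ℝ) :
    (∑ i, y i • (Uᵀ * A i * U))ᵀ = ∑ i, y i • (Uᵀ * A i * U) := by
  rw [Matrix.transpose_sum]
  refine Finset.sum_congr rfl fun i _ => ?_
  rw [Matrix.transpose_smul, Matrix.transpose_mul, Matrix.transpose_mul,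
    Matrix.transpose_transpose, (hA i).eq, Matrix.mul_assoc]

/-- For the face `F = { U M Uᵀ : M ∈ S₊^r }`, there exists `y` with
`bᵀy = 0` and `Z = Σᵢ yᵢ Aᵢ ∈ F* \ F^⊥` iff there exists `y` with `bᵀy = 0` such that
`Z̄ = Σᵢ yᵢ Uᵀ Aᵢ U` is positive semidefinite and nonzero. -/
theorem exposing_vector_iff_reduced (k r l : ℕ)
    (U : Matrix (Fin k) (Fin r) ℝ)
    (A : Fin l → Matrix (Fin k) (Fin k) ℝ) (hA : ∀ i, (A i).IsSymm)
    (b : Fin l → ℝ) :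
    (∃ y : Fin l → ℝ, b ⬝ᵥ y = 0 ∧
      -- `Z = Σᵢ yᵢ Aᵢ ∈ F*` : nonnegative inner product with every `U M Uᵀ`, `M ⪰ 0`
      (∀ M : Matrix (Fin r) (Fin r) ℝ, M.PosSemidef →
        0 ≤ ((∑ i, y i • A i) * (U * M * Uᵀ)).trace) ∧
      -- `Z ∉ F^⊥`
      ¬ (∀ M : Matrix (Fin r) (Fin r) ℝ, M.PosSemidef →
        ((∑ i, y i • A i) * (U * M * Uᵀ)).trace = 0)) ↔
    (∃ y : Fin l → ℝ, b ⬝ᵥ y = 0 ∧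
      (∑ i, y i • (Uᵀ * A i * U)).PosSemidef ∧
      (∑ i, y i • (Uᵀ * A i * U)) ≠ 0) := by
  constructor
  · rintro ⟨y, hb, hpos, hne⟩
    set Z := ∑ i, y i • (Uᵀ * A i * U) with hZ
    have hherm : Z.IsHermitian := by
      rw [Matrix.IsHermitian, Matrix.conjTranspose_eq_transpose_of_trivial]
      exact aux_symm U A hA y
    have hpsd : Z.PosSemidef := by
      refine .of_dotProduct_mulVec_nonneg hherm fun x => ?_
      have := hpos (Matrix.vecMulVec x x) (aux_psd_vecMulVec x)
      rw [aux_key, aux_trace_mul_vecMulVec] at this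
      simpa using this
    refine ⟨y, hb, hpsd, fun h0 => hne fun M hM => ?_⟩
    rw [aux_key, h0]
    simp
  · rintro ⟨y, hb, hpsd, hne⟩
    refine ⟨y, hb, fun M hM => ?_, fun hall => ?_⟩
    · rw [aux_key]
      exact aux_trace_mul_psd_nonneg hpsd hM
    · apply hne
      have := hall _ hpsd
      rw [aux_key] at this
      exact aux_eq_zero_of_trace_mul_self
        (by simpa [← Matrix.conjTranspose_eq_transpose_of_trivial] using hpsd.1.eq) this
end

section
/- Let U be a real k×r matrix, F = { U M Uᵀ : M ∈ S₊^r }, and let Z ∈ S^k be such that Z̄ := Uᵀ Z U is positive semidefinite. Let V be a real r×r̄ matrix whose columns form a basis of the null space of Z̄ (so Z̄V = 0, V has linearly independent columns, and rank V = dim ker Z̄). Then {Z}^⊥ ∩ F = { U V M̄ Vᵀ Uᵀ : M̄ ∈ S₊^{r̄} }, where {Z}^⊥ = { X ∈ S^k : ⟨X, Z⟩ = 0 }. -/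
open Matrix

private lemma trace_transpose_mul_self_eq_zero {m n : ℕ}
    (B : Matrix (Fin m) (Fin n) ℝ) (h : (Bᵀ * B).trace = 0) : B = 0 := by
  have hsum : ∑ j : Fin n, ∑ i : Fin m, B i j * B i j = 0 := by
    simpa [Matrix.trace, Matrix.diag, Matrix.mul_apply] using h
  ext i j
  have hnn : ∀ j : Fin n, 0 ≤ ∑ i : Fin m, B i j * B i j := fun j =>
    Finset.sum_nonneg fun i _ => mul_self_nonneg _
  have hj : ∑ i : Fin m, B i j * B i j = 0 :=
    (Finset.sum_eq_zero_iff_of_nonneg (fun j _ => hnn j)).mp hsum j (by simp)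
  have := (Finset.sum_eq_zero_iff_of_nonneg (fun i _ => mul_self_nonneg (B i j))).mp hj i
    (by simp)
  simpa using mul_self_eq_zero.mp this

/-- Let `F = { U M Uᵀ : M ∈ S₊^r }`, let `Z` be symmetric with
`Z̄ := Uᵀ Z U` positive semidefinite, and let the columns of `V` form a basis of the
null space of `Z̄`.  Then `{Z}^⊥ ∩ F = { (UV) M̄ (UV)ᵀ : M̄ ∈ S₊^r̄ }`. -/
theorem orthogonal_slice_of_face (k r rb : ℕ)
    (U : Matrix (Fin k) (Fin r) ℝ)
    (Z : Matrix (Fin k) (Fin k) ℝ) (hZsymm : Z.IsSymm)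
    (hZb : (Uᵀ * Z * U).PosSemidef)
    (V : Matrix (Fin r) (Fin rb) ℝ)
    -- the columns of `V` lie in the null space of `Z̄`
    (hZV : (Uᵀ * Z * U) * V = 0)
    -- the columns of `V` are linearly independent
    (hVind : LinearIndependent ℝ (fun j : Fin rb => fun i : Fin r => V i j))
    -- the columns of `V` span the null space of `Z̄`
    (hVspan : ∀ w : Fin r → ℝ, (Uᵀ * Z * U).mulVec w = 0 →
      ∃ c : Fin rb → ℝ, w = V.mulVec c) :
    {X : Matrix (Fin k) (Fin k) ℝ | (X * Z).trace = 0} ∩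
      {X : Matrix (Fin k) (Fin k) ℝ |
        ∃ M : Matrix (Fin r) (Fin r) ℝ, M.PosSemidef ∧ X = U * M * Uᵀ} =
    {X : Matrix (Fin k) (Fin k) ℝ |
      ∃ Mb : Matrix (Fin rb) (Fin rb) ℝ, Mb.PosSemidef ∧
        X = (U * V) * Mb * (U * V)ᵀ} := by
  set Zb : Matrix (Fin r) (Fin r) ℝ := Uᵀ * Z * U with hZbdef
  have hZbsymm : Zbᵀ = Zb := by
    rw [hZbdef]
    simp [Matrix.transpose_mul, Matrix.mul_assoc, hZsymm.eq]
  ext X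
  constructor
  · rintro ⟨hXtr, M, hM, rfl⟩
    -- trace (M * Zb) = 0
    have htr : (M * Zb).trace = 0 := by
      have h1 : (U * M * Uᵀ * Z).trace = (M * Zb).trace := by
        rw [hZbdef, Matrix.trace_mul_comm (U * M * Uᵀ) Z,
          Matrix.trace_mul_comm M (Uᵀ * Z * U), Matrix.trace_mul_comm Z,
          show Uᵀ * Z * U * M = (Uᵀ * Z) * (U * M) from Matrix.mul_assoc _ _ _,
          Matrix.trace_mul_comm (Uᵀ * Z)]
        simp [Matrix.mul_assoc]
      rw [← h1]
      exact hXtr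
    -- factor M = S * S with S symmetric PSD
    obtain ⟨S, hSS, hSsymm⟩ : ∃ S : Matrix (Fin r) (Fin r) ℝ, S * S = M ∧ Sᵀ = S := by
      open scoped MatrixOrder in
      exact ⟨CFC.sqrt M, CFC.sqrt_mul_sqrt_self M hM.nonneg,
        by simpa using (CFC.sqrt_nonneg M).posSemidef.1.eq⟩
    -- factor Zb = Cᵀ * C
    obtain ⟨C, hC⟩ : ∃ C : Matrix (Fin r) (Fin r) ℝ, Zb = Cᴴ * C := by
      open scoped MatrixOrder in
      exact ⟨CFC.sqrt Zb, by
        rw [← Matrix.star_eq_conjTranspose, (CFC.sqrt_nonneg Zb).isSelfAdjoint.star_eq,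
          CFC.sqrt_mul_sqrt_self Zb hZb.nonneg]⟩
    have hCreal : Zb = Cᵀ * C := by simpa using hC
    -- trace ((C*S)ᵀ * (C*S)) = 0
    have htr2 : ((C * S)ᵀ * (C * S)).trace = 0 := by
      have h2 : ((C * S)ᵀ * (C * S)) = Sᵀ * Zb * S := by
        rw [hCreal, Matrix.transpose_mul]
        simp [Matrix.mul_assoc]
      rw [h2, hSsymm, Matrix.trace_mul_comm (S * Zb) S, ← Matrix.mul_assoc, hSS]
      exact htr
    have hCS : C * S = 0 := trace_transpose_mul_self_eq_zero _ htr2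
    have hZbS : Zb * S = 0 := by
      rw [hCreal, Matrix.mul_assoc, hCS, Matrix.mul_zero]
    -- columns of S lie in ker Zb, so S = V * B
    have hcol : ∀ j : Fin r, ∃ c : Fin rb → ℝ, (fun i => S i j) = V.mulVec c := by
      intro j
      apply hVspan
      funext i
      have := congrFun (congrFun hZbS i) j
      simpa [Matrix.mul_apply, Matrix.mulVec, dotProduct] using this
    choose c hc using hcol
    set B : Matrix (Fin rb) (Fin r) ℝ := fun l j => c j l with hBdef
    have hSVB : S = V * B := by
      ext i j
      have := congrFun (hc j) i
      rw [Matrix.mul_apply]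
      simpa [Matrix.mul_apply, Matrix.mulVec, dotProduct, hBdef] using this
    refine ⟨B * Bᵀ, ?_, ?_⟩
    · simpa using Matrix.posSemidef_self_mul_conjTranspose B
    · have hM' : M = V * (B * Bᵀ) * Vᵀ := by
        conv_lhs => rw [← hSS]
        nth_rewrite 2 [← hSsymm]
        rw [hSVB, Matrix.transpose_mul]
        simp [Matrix.mul_assoc]
      rw [hM', Matrix.transpose_mul U V]
      simp [Matrix.mul_assoc]
  · rintro ⟨Mb, hMb, rfl⟩
    constructor
    · -- trace part
      have hVZb : Vᵀ * Zb = 0 := by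
        have h3 : (Zb * V)ᵀ = 0 := by rw [hZV]; simp
        rw [Matrix.transpose_mul, hZbsymm] at h3
        exact h3
      show ((U * V) * Mb * (U * V)ᵀ * Z).trace = 0
      have h1 : (U * V)ᵀ = Vᵀ * Uᵀ := Matrix.transpose_mul U V
      have h0 : (U * V)ᵀ * (Z * (U * V)) = 0 := by
        rw [Matrix.transpose_mul]
        have h4 : Vᵀ * Uᵀ * (Z * (U * V)) = (Vᵀ * Zb) * V := by
          rw [hZbdef]; simp [Matrix.mul_assoc]
        rw [h4, hVZb, Matrix.zero_mul]
      calc ((U * V) * Mb * (U * V)ᵀ * Z).trace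
          = (((U * V) * Mb) * ((U * V)ᵀ * Z)).trace := by simp [Matrix.mul_assoc]
        _ = (((U * V)ᵀ * Z) * ((U * V) * Mb)).trace := Matrix.trace_mul_comm _ _
        _ = (Mb * ((U * V)ᵀ * (Z * (U * V)))).trace := by
            rw [Matrix.trace_mul_comm Mb]; simp [Matrix.mul_assoc]
        _ = 0 := by rw [h0]; simp
    · refine ⟨V * Mb * Vᵀ, ?_, ?_⟩
      · have := hMb.mul_mul_conjTranspose_same V
        simpa using this
      · rw [Matrix.transpose_mul U V]
        simp [Matrix.mul_assoc]
end

section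
/- (Eckart–Young for the positive semidefinite cone) Let X ∈ S^k have spectral decomposition X = Σ_{i=1}^k μ_i u_i u_iᵀ with eigenvalues μ_1 ≥ μ_2 ≥ ⋯ ≥ μ_k and orthonormal eigenvectors u_1,…,u_k. For 0 ≤ r ≤ k define P_r(X) = Σ_{i=1}^r max(μ_i, 0)·u_i u_iᵀ. Then P_r(X) is positive semidefinite with rank at most r, and for every Y ∈ S₊^k with rank(Y) ≤ r one has ‖X − P_r(X)‖_F ≤ ‖X − Y‖_F, where ‖·‖_F is the Frobenius norm. -/
open Matrix



section helpersEY
variable {k m : ℕ}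

lemma collapse {w : Fin m → (Fin k → ℝ)}
    (horth : ∀ i j, w i ⬝ᵥ w j = if i = j then (1:ℝ) else 0)
    (s t : Fin m → ℝ) :
    ∑ a, (∑ i, s i * w i a) * (∑ j, t j * w j a) = ∑ i, s i * t i := by
  have h1 : ∀ a : Fin k, (∑ i, s i * w i a) * (∑ j, t j * w j a)
      = ∑ i, ∑ j, (s i * t j) * (w i a * w j a) := by
    intro a; rw [Finset.sum_mul_sum]
    exact Finset.sum_congr rfl fun i _ => Finset.sum_congr rfl fun j _ => by ring
  simp_rw [h1]
  rw [Finset.sum_comm]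
  have h2 : ∀ i, ∑ a, ∑ j, (s i * t j) * (w i a * w j a)
      = ∑ j, (s i * t j) * (w i ⬝ᵥ w j) := by
    intro i
    rw [Finset.sum_comm]
    exact Finset.sum_congr rfl fun j _ => by rw [dotProduct, Finset.mul_sum]
  simp_rw [h2, horth]
  simp [mul_ite]

variable {u : Fin k → (Fin k → ℝ)}

lemma parseval (horth : ∀ i j, u i ⬝ᵥ u j = if i = j then (1:ℝ) else 0)
    (x : Fin k → ℝ) : ∑ i, (u i ⬝ᵥ x)^2 = x ⬝ᵥ x := by
  set U : Matrix (Fin k) (Fin k) ℝ := Matrix.of u with hU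
  have hUUt : U * Uᵀ = 1 := by
    ext i j
    simpa [Matrix.mul_apply, dotProduct, Matrix.one_apply, hU] using horth i j
  have hUtU := mul_eq_one_comm.mp hUUt
  have horth' : ∀ a b, (fun a i => u i a) a ⬝ᵥ (fun a i => u i a) b
      = if a = b then (1:ℝ) else 0 := by
    intro a b
    have := congrFun (congrFun hUtU a) b
    simpa [Matrix.mul_apply, dotProduct, Matrix.one_apply, hU] using this
  have := collapse horth' x x
  simp only [dotProduct]
  rw [← this]
  apply Finset.sum_congr rfl
  intro i _
  simp only [sq, dotProduct]
  congr 1 <;> exact Finset.sum_congr rfl fun a _ => by ring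

lemma bessel {w : Fin m → (Fin k → ℝ)}
    (hw : ∀ i j, w i ⬝ᵥ w j = if i = j then (1:ℝ) else 0)
    (x : Fin k → ℝ) : ∑ j, (x ⬝ᵥ w j)^2 ≤ x ⬝ᵥ x := by
  set c : Fin m → ℝ := fun j => x ⬝ᵥ w j with hc
  have h0 : (0:ℝ) ≤ ∑ a, (x a - ∑ j, c j * w j a)^2 :=
    Finset.sum_nonneg fun a _ => sq_nonneg _
  have hexp : ∑ a, (x a - ∑ j, c j * w j a)^2
      = x ⬝ᵥ x - 2 * (∑ a, x a * ∑ j, c j * w j a)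
        + ∑ a, (∑ j, c j * w j a) * (∑ j, c j * w j a) := by
    have point : ∀ a : Fin k, (x a - ∑ j, c j * w j a)^2
        = x a * x a - 2 * (x a * (∑ j, c j * w j a))
          + (∑ j, c j * w j a) * (∑ j, c j * w j a) := fun a => by ring
    simp_rw [point]
    rw [Finset.sum_add_distrib, Finset.sum_sub_distrib, ← Finset.mul_sum]
    simp only [dotProduct]
  have hmid : ∑ a, x a * ∑ j, c j * w j a = ∑ j, c j * c j := by
    simp_rw [Finset.mul_sum]
    rw [Finset.sum_comm]
    apply Finset.sum_congr rfl
    intro j _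
    have : ∑ a, x a * (c j * w j a) = c j * (x ⬝ᵥ w j) := by
      rw [dotProduct, Finset.mul_sum]
      exact Finset.sum_congr rfl fun a _ => by ring
    rw [this, hc]
  have hlast : ∑ a, (∑ j, c j * w j a) * (∑ j, c j * w j a) = ∑ j, c j * c j :=
    collapse hw c c
  have hsq : ∑ j, (x ⬝ᵥ w j)^2 = ∑ j, c j * c j :=
    Finset.sum_congr rfl fun j _ => by rw [sq, hc]
  rw [hsq]
  rw [hexp, hmid, hlast] at h0
  linarith

lemma entry_sum (d : Fin k → ℝ) (a b : Fin k) :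
    (∑ i, d i • vecMulVec (u i) (u i)) a b = ∑ i, d i * u i a * u i b := by
  simp [Matrix.sum_apply, vecMulVec_apply, mul_assoc]

lemma gdecomp (horth : ∀ i j, u i ⬝ᵥ u j = if i = j then (1:ℝ) else 0)
    (d e : Fin k → ℝ) :
    ∑ a, ∑ b, (∑ i, d i * u i a * u i b) * (∑ j, e j * u j a * u j b)
      = ∑ i, d i * e i := by
  have h1 : ∀ a, ∑ b, (∑ i, (d i * u i a) * u i b) * (∑ j, (e j * u j a) * u j b)
      = ∑ i, (d i * u i a) * (e i * u i a) := fun a =>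
    collapse horth (fun i => d i * u i a) (fun j => e j * u j a)
  simp_rw [h1]
  rw [Finset.sum_comm]
  have h2 : ∀ i, ∑ a, (d i * u i a) * (e i * u i a) = (d i * e i) * (u i ⬝ᵥ u i) := by
    intro i; rw [dotProduct, Finset.mul_sum]
    exact Finset.sum_congr rfl fun a _ => by ring
  simp_rw [h2, horth]
  simp

lemma mulVec_decomp (d : Fin k → ℝ) (x : Fin k → ℝ) (a : Fin k) :
    (∑ i, d i • vecMulVec (u i) (u i)).mulVec x a = ∑ i, (d i * (u i ⬝ᵥ x)) * u i a := by
  simp only [Matrix.mulVec, dotProduct]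
  simp_rw [entry_sum, Finset.sum_mul]
  rw [Finset.sum_comm]
  apply Finset.sum_congr rfl
  intro i _
  simp only [dotProduct, Finset.mul_sum]
  rw [Finset.sum_mul]
  exact Finset.sum_congr rfl fun b _ => by ring

lemma q_decomp (horth : ∀ i j, u i ⬝ᵥ u j = if i = j then (1:ℝ) else 0)
    (d : Fin k → ℝ) (x : Fin k → ℝ) :
    ∑ a, ((∑ i, d i • vecMulVec (u i) (u i)).mulVec x a)^2
      = ∑ i, (d i)^2 * (u i ⬝ᵥ x)^2 := by
  simp_rw [mulVec_decomp]
  simp only [sq]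
  rw [collapse horth (fun i => d i * (u i ⬝ᵥ x)) (fun i => d i * (u i ⬝ᵥ x))]
  exact Finset.sum_congr rfl fun i _ => by ring

lemma trace_frob (A : Matrix (Fin k) (Fin k) ℝ) :
    (Aᵀ * A).trace = ∑ a, ∑ b, (A a b)^2 := by
  simp only [Matrix.trace, Matrix.mul_apply, Matrix.diag, Matrix.transpose_apply, ← sq]
  exact Finset.sum_comm

lemma frob_rows (M : Matrix (Fin k) (Fin k) ℝ) {w : Fin m → (Fin k → ℝ)}
    (hw : ∀ i j, w i ⬝ᵥ w j = if i = j then (1:ℝ) else 0) :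
    ∑ j, ∑ a, (M.mulVec (w j) a)^2 ≤ ∑ a, ∑ b, (M a b)^2 := by
  rw [Finset.sum_comm]
  apply Finset.sum_le_sum
  intro a _
  have : ∑ j, (M.mulVec (w j) a)^2 = ∑ j, ((M a) ⬝ᵥ w j)^2 := by
    apply Finset.sum_congr rfl
    intro j _
    rfl
  rw [this]
  have hb := bessel hw (M a)
  refine hb.trans_eq ?_
  rw [dotProduct]
  exact Finset.sum_congr rfl fun b _ => by rw [sq]


lemma exists_ker_family {k r : ℕ} (hr : r ≤ k) (Y : Matrix (Fin k) (Fin k) ℝ)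
    (hrank : Y.rank ≤ r) :
    ∃ w : Fin (k - r) → (Fin k → ℝ),
      (∀ i j, w i ⬝ᵥ w j = if i = j then (1:ℝ) else 0) ∧ ∀ j, Y.mulVec (w j) = 0 := by
  classical
  have hker : k - r ≤ Module.finrank ℝ (LinearMap.ker Y.mulVecLin) := by
    have h1 := LinearMap.finrank_range_add_finrank_ker Y.mulVecLin
    rw [Module.finrank_pi] at h1
    have h2 : Y.rank = Module.finrank ℝ (LinearMap.range Y.mulVecLin) := rfl
    rw [Fintype.card_fin] at h1
    omega
  let e : EuclideanSpace ℝ (Fin k) ≃ₗ[ℝ] (Fin k → ℝ) := WithLp.linearEquiv 2 ℝ (Fin k → ℝ)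
  let V : Submodule ℝ (EuclideanSpace ℝ (Fin k)) :=
    (LinearMap.ker Y.mulVecLin).map (e.symm : (Fin k → ℝ) →ₗ[ℝ] EuclideanSpace ℝ (Fin k))
  have hV : Module.finrank ℝ V = Module.finrank ℝ (LinearMap.ker Y.mulVecLin) :=
    LinearEquiv.finrank_map_eq e.symm _
  have hle : k - r ≤ Module.finrank ℝ V := hV ▸ hker
  let b := stdOrthonormalBasis ℝ V
  have hinner : ∀ x y : EuclideanSpace ℝ (Fin k),
      (e x) ⬝ᵥ (e y) = (inner ℝ x y : ℝ) := by
    intro x y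
    rw [EuclideanSpace.inner_eq_star_dotProduct, dotProduct_comm]
    rfl
  refine ⟨fun j => e ((b (Fin.castLE hle j) : EuclideanSpace ℝ (Fin k))), ?_, ?_⟩
  · intro i j
    rw [hinner, ← Submodule.coe_inner, orthonormal_iff_ite.mp b.orthonormal]
    by_cases h : i = j
    · simp [h]
    · have : Fin.castLE hle i ≠ Fin.castLE hle j := by
        simp [Fin.ext_iff] at h ⊢; omega
      simp [h, this]
  · intro j
    obtain ⟨y, hy, hy2⟩ := (b (Fin.castLE hle j)).2
    show Y *ᵥ e ((b (Fin.castLE hle j)) : EuclideanSpace ℝ (Fin k)) = 0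
    rw [← hy2, LinearEquiv.coe_coe, LinearEquiv.apply_symm_apply, ← Matrix.mulVecLin_apply]
    exact LinearMap.mem_ker.mp hy

lemma card_ge {k : ℕ} (r : ℕ) (hrk : r < k) :
    (Finset.univ.filter (fun i : Fin k => r ≤ (i:ℕ))).card = k - r := by
  have : (Finset.univ.filter (fun i : Fin k => r ≤ (i:ℕ))) = Finset.Ici (⟨r, hrk⟩ : Fin k) := by
    ext i
    simp [Fin.le_def]
  rw [this, Fin.card_Ici]

/-- the weighted rearrangement inequality -/
lemma weight_ineq {k r : ℕ} (hr : r ≤ k) (a t : Fin k → ℝ)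
    (ha : Antitone a) (ha0 : ∀ i, 0 ≤ a i)
    (ht0 : ∀ i, 0 ≤ t i) (ht1 : ∀ i, t i ≤ 1)
    (hsum : (k : ℝ) - r ≤ ∑ i, t i) :
    ∑ i ∈ Finset.univ.filter (fun i : Fin k => r ≤ (i:ℕ)), a i ≤ ∑ i, a i * t i := by
  classical
  rcases eq_or_lt_of_le hr with h | hrk
  · have : (Finset.univ.filter (fun i : Fin k => r ≤ (i:ℕ))) = ∅ := by
      ext i; simp; omega
    rw [this]
    simp only [Finset.sum_empty]
    exact Finset.sum_nonneg fun i _ => mul_nonneg (ha0 i) (ht0 i)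
  set A := Finset.univ.filter (fun i : Fin k => r ≤ (i:ℕ)) with hA
  set ρ : Fin k := ⟨r, hrk⟩ with hρ
  have hsplit : ∑ i, a i * t i = ∑ i ∈ A, a i * t i + ∑ i ∈ Aᶜ, a i * t i :=
    (Finset.sum_add_sum_compl A _).symm
  have hcardA : (A.card : ℝ) = (k : ℝ) - r := by
    rw [hA, card_ge r hrk]; push_cast [Nat.cast_sub hr]; ring
  -- ∑_{Aᶜ} t ≥ ∑_A (1 - t)
  have h1 : ∑ i ∈ A, (1 - t i) ≤ ∑ i ∈ Aᶜ, t i := by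
    have : ∑ i ∈ A, (1 - t i) = A.card - ∑ i ∈ A, t i := by
      rw [Finset.sum_sub_distrib]; simp
    rw [this, hcardA]
    have := Finset.sum_add_sum_compl A t
    linarith
  -- a i ≥ a ρ on Aᶜ, a i ≤ a ρ on A
  have h2 : a ρ * ∑ i ∈ Aᶜ, t i ≤ ∑ i ∈ Aᶜ, a i * t i := by
    rw [Finset.mul_sum]
    apply Finset.sum_le_sum
    intro i hi
    have : (i:ℕ) < r := by simpa [hA] using hi
    exact mul_le_mul_of_nonneg_right (ha (by simp [hρ, Fin.le_def]; omega)) (ht0 i)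
  have h3 : ∑ i ∈ A, a i * (1 - t i) ≤ a ρ * ∑ i ∈ A, (1 - t i) := by
    rw [Finset.mul_sum]
    apply Finset.sum_le_sum
    intro i hi
    have : r ≤ (i:ℕ) := by simpa [hA] using hi
    exact mul_le_mul_of_nonneg_right (ha (by simp [hρ, Fin.le_def]; omega))
      (by linarith [ht1 i])
  have h4 : a ρ * ∑ i ∈ A, (1 - t i) ≤ a ρ * ∑ i ∈ Aᶜ, t i :=
    mul_le_mul_of_nonneg_left h1 (ha0 ρ)
  have h5 : ∑ i ∈ A, a i * (1 - t i) = ∑ i ∈ A, a i - ∑ i ∈ A, a i * t i := by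
    rw [← Finset.sum_sub_distrib]
    exact Finset.sum_congr rfl fun i _ => by ring
  rw [hsplit]
  linarith

lemma expand2 {k : ℕ} (f g : Fin k → Fin k → ℝ) :
    ∑ a, ∑ b, (f a b - g a b)^2
      = ∑ a, ∑ b, (f a b)^2 + ∑ a, ∑ b, (g a b)^2 - 2 * ∑ a, ∑ b, f a b * g a b := by
  have h1 : ∀ a b, (f a b - g a b)^2
      = (f a b)^2 + (g a b)^2 - 2*(f a b * g a b) := by intros; ring
  have h2 : ∀ a, ∑ b, ((f a b)^2 + (g a b)^2 - 2*(f a b * g a b))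
      = ∑ b, (f a b)^2 + ∑ b, (g a b)^2 - 2 * ∑ b, f a b * g a b := by
    intro a
    rw [Finset.sum_sub_distrib, Finset.sum_add_distrib, ← Finset.mul_sum]
  simp_rw [h1, h2]
  rw [Finset.sum_sub_distrib, Finset.sum_add_distrib, ← Finset.mul_sum]

lemma gY (Y : Matrix (Fin k) (Fin k) ℝ) (c : Fin k → ℝ) :
    ∑ a, ∑ b', Y a b' * (∑ i, c i * u i a * u i b')
      = ∑ i, c i * (u i ⬝ᵥ Y.mulVec (u i)) := by
  simp_rw [Finset.mul_sum]
  have hswap : ∀ a, ∑ b', ∑ i, Y a b' * (c i * u i a * u i b')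
      = ∑ i, ∑ b', Y a b' * (c i * u i a * u i b') := fun a => Finset.sum_comm
  simp_rw [hswap]
  rw [Finset.sum_comm]
  apply Finset.sum_congr rfl
  intro i _
  simp only [dotProduct, Matrix.mulVec, Finset.mul_sum]
  apply Finset.sum_congr rfl
  intro a _
  exact Finset.sum_congr rfl fun b _ => by ring

lemma dot_decomp (d : Fin k → ℝ) (x : Fin k → ℝ) :
    x ⬝ᵥ (∑ i, d i • vecMulVec (u i) (u i)).mulVec x = ∑ i, d i * (u i ⬝ᵥ x)^2 := by
  simp only [dotProduct]
  simp_rw [mulVec_decomp, Finset.mul_sum]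
  rw [Finset.sum_comm]
  apply Finset.sum_congr rfl
  intro i _
  simp only [dotProduct, sq, Finset.mul_sum]
  apply Finset.sum_congr rfl
  intro a _
  have hS : (∑ b, d i * (u i b * x b)) = d i * (∑ b, u i b * x b) := by
    rw [Finset.mul_sum]
  rw [hS]
  ring

end helpersEY


/-- Eckart–Young for the positive semidefinite cone.  Let
`X = Σᵢ μᵢ uᵢuᵢᵀ` be a spectral decomposition of the symmetric matrix `X` with
`μ₁ ≥ ⋯ ≥ μ_k` and orthonormal `uᵢ`, and for `0 ≤ r ≤ k` let
`P = Σ_{i < r} max(μᵢ,0) uᵢuᵢᵀ`.  Then `P` is positive semidefinite of rank at most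
`r`, and `P` is a closest (in Frobenius norm) matrix to `X` among all positive
semidefinite matrices of rank at most `r`. -/
theorem eckart_young_psd (k r : ℕ) (hr : r ≤ k)
    (X : Matrix (Fin k) (Fin k) ℝ) (hX : X.IsSymm)
    (μ : Fin k → ℝ) (hmono : Antitone μ)
    (u : Fin k → (Fin k → ℝ))
    (horth : ∀ i j, u i ⬝ᵥ u j = if i = j then (1 : ℝ) else 0)
    (hdecomp : X = ∑ i, μ i • vecMulVec (u i) (u i))
    (P : Matrix (Fin k) (Fin k) ℝ)
    (hP : P = ∑ i ∈ Finset.univ.filter (fun i : Fin k => (i : ℕ) < r),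
      max (μ i) 0 • vecMulVec (u i) (u i)) :
    P.PosSemidef ∧ P.rank ≤ r ∧
    ∀ Y : Matrix (Fin k) (Fin k) ℝ, Y.PosSemidef → Y.rank ≤ r →
      Real.sqrt (((X - P)ᵀ * (X - P)).trace) ≤
        Real.sqrt (((X - Y)ᵀ * (X - Y)).trace) := by
  classical
  have hXe : ∀ a b, X a b = ∑ i, μ i * u i a * u i b := by
    intro a b; rw [hdecomp]; exact entry_sum μ a b
  set eco : Fin k → ℝ := fun i => if (i:ℕ) < r then max (μ i) 0 else 0 with heco
  have hPsum : P = ∑ i, eco i • vecMulVec (u i) (u i) := by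
    rw [hP, Finset.sum_filter]
    exact Finset.sum_congr rfl fun i _ => by
      by_cases h : (i:ℕ) < r <;> simp [heco, h]
  have hPe : ∀ a b, P a b = ∑ i, eco i * u i a * u i b := by
    intro a b; rw [hPsum]; exact entry_sum eco a b
  refine ⟨PosSemidef.of_dotProduct_mulVec_nonneg ?_ ?_, ?_, ?_⟩
  · -- Hermitian
    ext a b
    simp only [Matrix.conjTranspose_apply, star_trivial]
    rw [hPe, hPe]
    exact Finset.sum_congr rfl fun i _ => by ring
  · -- quadratic form nonneg
    intro x
    rw [star_trivial, hPsum, dot_decomp]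
    refine Finset.sum_nonneg fun i _ => mul_nonneg ?_ (sq_nonneg _)
    by_cases h : (i:ℕ) < r <;> simp [heco, h, le_max_right]
  · -- rank
    set B : Matrix (Fin k) (Fin r) ℝ :=
      Matrix.of fun a j => max (μ (Fin.castLE hr j)) 0 * u (Fin.castLE hr j) a with hB
    set C : Matrix (Fin r) (Fin k) ℝ :=
      Matrix.of fun j b => u (Fin.castLE hr j) b with hC
    have hfil : (Finset.univ.filter (fun i : Fin k => (i:ℕ) < r))
        = Finset.univ.map (Fin.castLEEmb hr) := by
      ext i
      simp only [Finset.mem_filter, Finset.mem_univ, true_and, Finset.mem_map]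
      constructor
      · intro h
        refine ⟨⟨(i:ℕ), h⟩, ?_⟩
        apply Fin.ext
        simp [Fin.castLEEmb]
      · rintro ⟨j, rfl⟩
        simpa [Fin.castLEEmb] using j.2
    have hPBC : P = B * C := by
      ext a b
      rw [hP, Matrix.sum_apply, hfil, Finset.sum_map, Matrix.mul_apply]
      apply Finset.sum_congr rfl
      intro j _
      simp [hB, hC, Matrix.smul_apply, vecMulVec_apply, Fin.castLEEmb]
      ring
    calc P.rank = (B * C).rank := by rw [hPBC]
      _ ≤ B.rank := Matrix.rank_mul_le_left B C
      _ ≤ r := Matrix.rank_le_width B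
  · -- main inequality
    intro Y hY hYrank
    apply Real.sqrt_le_sqrt
    set bb : Fin k → ℝ := fun i => max (μ i) 0 with hbb
    set cc : Fin k → ℝ := fun i => max (μ i) 0 - μ i with hcc
    have hbc : ∀ i, bb i * cc i = 0 := by
      intro i
      rcases le_or_gt (μ i) 0 with h | h
      · simp [hbb, hcc, max_eq_right h]
      · simp [hbb, hcc, max_eq_left h.le]
    have hbb0 : ∀ i, 0 ≤ bb i := fun i => le_max_right _ _
    have hcc0 : ∀ i, 0 ≤ cc i := fun i => sub_nonneg.mpr (le_max_left _ _)
    have hbbmono : Antitone bb := fun i j hij => max_le_max (hmono hij) le_rfl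
    set A := Finset.univ.filter (fun i : Fin k => r ≤ (i:ℕ)) with hA
    -- LHS computation
    have hdP : ∀ a b', (X - P) a b' = ∑ i, (μ i - eco i) * u i a * u i b' := by
      intro a b'
      rw [Matrix.sub_apply, hXe, hPe, ← Finset.sum_sub_distrib]
      exact Finset.sum_congr rfl fun i _ => by ring
    have hLHS : ((X - P)ᵀ * (X - P)).trace = ∑ i, (μ i - eco i) * (μ i - eco i) := by
      rw [trace_frob]
      have hsq : ∀ a b', ((X - P) a b')^2
          = (∑ i, (μ i - eco i) * u i a * u i b')
            * (∑ i, (μ i - eco i) * u i a * u i b') := by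
        intro a b'; rw [hdP, sq]
      simp_rw [hsq]
      exact gdecomp horth _ _
    have hLHS2 : ∑ i, (μ i - eco i) * (μ i - eco i)
        = ∑ i, cc i * cc i + ∑ i ∈ A, bb i * bb i := by
      rw [hA, Finset.sum_filter, ← Finset.sum_add_distrib]
      apply Finset.sum_congr rfl
      intro i _
      have hbci := hbc i
      by_cases h : (i:ℕ) < r
      · have h' : ¬ (r ≤ (i:ℕ)) := by omega
        simp only [heco, if_pos h, if_neg h', hcc, add_zero]
        ring
      · have h' : r ≤ (i:ℕ) := by omega
        simp only [heco, if_neg h, if_pos h']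
        simp only [hbb, hcc] at hbci ⊢
        linear_combination (-2 : ℝ) * hbci
    -- RHS lower bound
    obtain ⟨w, hw, hker⟩ := exists_ker_family hr Y hYrank
    set Xp : Matrix (Fin k) (Fin k) ℝ := ∑ i, bb i • vecMulVec (u i) (u i) with hXp
    have hXpe : ∀ a b', Xp a b' = ∑ i, bb i * u i a * u i b' := by
      intro a b'; rw [hXp]; exact entry_sum bb a b'
    have hsplitXY : ∀ a b', (X - Y) a b'
        = (Xp - Y) a b' - (∑ i, cc i * u i a * u i b') := by
      intro a b'
      simp only [Matrix.sub_apply]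
      have key : ∑ i, μ i * u i a * u i b'
          = (∑ i, bb i * u i a * u i b') - ∑ i, cc i * u i a * u i b' := by
        rw [← Finset.sum_sub_distrib]
        exact Finset.sum_congr rfl fun i _ => by simp only [hbb, hcc]; ring
      rw [hXe, hXpe, key]
      ring
    have hF2 : ∑ a, ∑ b', (∑ i, cc i * u i a * u i b')^2 = ∑ i, cc i * cc i := by
      simp_rw [sq]
      exact gdecomp horth cc cc
    have hG : ∑ a, ∑ b', ((Xp - Y) a b') * (∑ i, cc i * u i a * u i b')
        = ∑ i, bb i * cc i - ∑ i, cc i * (u i ⬝ᵥ Y.mulVec (u i)) := by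
      have hpt : ∀ a b', ((Xp - Y) a b') * (∑ i, cc i * u i a * u i b')
          = (∑ i, bb i * u i a * u i b') * (∑ i, cc i * u i a * u i b')
            - Y a b' * (∑ i, cc i * u i a * u i b') := by
        intro a b'
        rw [Matrix.sub_apply, hXpe]
        ring
      simp_rw [hpt, Finset.sum_sub_distrib]
      rw [gdecomp horth bb cc, gY Y cc]
    have hT : ((X - Y)ᵀ * (X - Y)).trace
        = ∑ a, ∑ b', ((Xp - Y) a b')^2 + ∑ i, cc i * cc i
          - 2 * (∑ i, bb i * cc i - ∑ i, cc i * (u i ⬝ᵥ Y.mulVec (u i))) := by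
      rw [trace_frob]
      simp_rw [hsplitXY]
      rw [expand2 (fun a b => (Xp - Y) a b) (fun a b => ∑ i, cc i * u i a * u i b), hF2, hG]
    have hbc0 : ∑ i, bb i * cc i = 0 := by
      simp [hbc]
    have hYq : ∀ i, (0:ℝ) ≤ u i ⬝ᵥ Y.mulVec (u i) := by
      intro i
      have := hY.dotProduct_mulVec_nonneg (u i)
      simpa using this
    -- lower bound on the first term
    set t : Fin k → ℝ := fun i => ∑ j, (u i ⬝ᵥ w j)^2 with ht
    have hF1 : ∑ i ∈ A, bb i * bb i ≤ ∑ a, ∑ b', ((Xp - Y) a b')^2 := by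
      have hstep1 : ∑ j, ∑ a, ((Xp - Y).mulVec (w j) a)^2
          ≤ ∑ a, ∑ b', ((Xp - Y) a b')^2 := frob_rows _ hw
      have hmv : ∀ j, (Xp - Y).mulVec (w j) = Xp.mulVec (w j) := by
        intro j; rw [Matrix.sub_mulVec, hker j, sub_zero]
      have hstep2 : ∀ j, ∑ a, (Xp.mulVec (w j) a)^2
          = ∑ i, (bb i)^2 * (u i ⬝ᵥ w j)^2 := by
        intro j; rw [hXp]; exact q_decomp horth bb (w j)
      have hsum_t : ∑ j, ∑ i, (bb i)^2 * (u i ⬝ᵥ w j)^2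
          = ∑ i, (bb i * bb i) * t i := by
        rw [Finset.sum_comm]
        apply Finset.sum_congr rfl
        intro i _
        rw [ht, Finset.mul_sum]
        exact Finset.sum_congr rfl fun j _ => by ring
      have ht0 : ∀ i, 0 ≤ t i := fun i => Finset.sum_nonneg fun j _ => sq_nonneg _
      have ht1 : ∀ i, t i ≤ 1 := by
        intro i
        have hb := bessel hw (u i)
        have : u i ⬝ᵥ u i = 1 := by rw [horth i i]; simp
        rw [this] at hb
        exact hb
      have htsum : (k:ℝ) - r ≤ ∑ i, t i := by
        have hswap : ∑ i, t i = ∑ j, ∑ i, (u i ⬝ᵥ w j)^2 := by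
          simp_rw [ht]; exact Finset.sum_comm
        have hone : ∀ j, ∑ i, (u i ⬝ᵥ w j)^2 = 1 := by
          intro j
          rw [parseval horth (w j), hw j j]
          simp
        rw [hswap]
        rw [Finset.sum_congr rfl fun j _ => hone j]
        simp only [Finset.sum_const, Finset.card_univ, Fintype.card_fin, nsmul_eq_mul,
          mul_one]
        rw [Nat.cast_sub hr]
      have hwi := weight_ineq hr (fun i => bb i * bb i) t
        (fun i j hij => mul_le_mul (hbbmono hij) (hbbmono hij) (hbb0 j) (hbb0 i))
        (fun i => mul_nonneg (hbb0 i) (hbb0 i)) ht0 ht1 htsum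
      calc ∑ i ∈ A, bb i * bb i ≤ ∑ i, (bb i * bb i) * t i := hwi
        _ = ∑ j, ∑ i, (bb i)^2 * (u i ⬝ᵥ w j)^2 := hsum_t.symm
        _ = ∑ j, ∑ a, (Xp.mulVec (w j) a)^2 := by
            exact Finset.sum_congr rfl fun j _ => (hstep2 j).symm
        _ = ∑ j, ∑ a, ((Xp - Y).mulVec (w j) a)^2 := by
            exact Finset.sum_congr rfl fun j _ => by rw [hmv j]
        _ ≤ ∑ a, ∑ b', ((Xp - Y) a b')^2 := hstep1
    have hYsum : (0:ℝ) ≤ ∑ i, cc i * (u i ⬝ᵥ Y.mulVec (u i)) :=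
      Finset.sum_nonneg fun i _ => mul_nonneg (hcc0 i) (hYq i)
    rw [hLHS, hLHS2, hT, hbc0]
    linarith
end
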